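/- arXiv:1809.00377 — 12 statements merged into one kernel-verified Lean document; each statement's English description precedes it below -/
import Mathlib

section
/- If M is an integrable mean function and 0 < a < b, then J_M(a,b) := 3·I_M(a,b) − (a+b) satisfies a ≤ J_M(a,b) ≤ b, where I_M(a,b) = (1/(b−a)²)·∫ₐᵇ∫ₐᵇ M(x,y) dx dy. -/
open MeasureTheory intervalIntegral

lemma inner_min_eval (a b x : ℝ) (hax : a ≤ x) (hxb : x ≤ b) :
    ∫ y in a..b, min x y = -x^2/2 + b*x - a^2/2 := by
  have h1 : IntervalIntegrable (fun y => min x y) volume a x :=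
    (continuous_const.min continuous_id).intervalIntegrable _ _
  have h2 : IntervalIntegrable (fun y => min x y) volume x b :=
    (continuous_const.min continuous_id).intervalIntegrable _ _
  rw [← integral_add_adjacent_intervals h1 h2]
  have e1 : ∫ y in a..x, min x y = ∫ y in a..x, y := by
    apply integral_congr
    intro y hy
    rw [Set.uIcc_of_le hax] at hy
    exact min_eq_right hy.2
  have e2 : ∫ y in x..b, min x y = ∫ y in x..b, (x : ℝ) := by
    apply integral_congr
    intro y hy
    rw [Set.uIcc_of_le hxb] at hy
    exact min_eq_left hy.1
  rw [e1, e2, integral_id, _root_.intervalIntegral.integral_const]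
  simp only [smul_eq_mul]
  ring

lemma inner_max_eval (a b x : ℝ) (hax : a ≤ x) (hxb : x ≤ b) :
    ∫ y in a..b, max x y = x^2/2 - a*x + b^2/2 := by
  have h1 : IntervalIntegrable (fun y => max x y) volume a x :=
    (continuous_const.max continuous_id).intervalIntegrable _ _
  have h2 : IntervalIntegrable (fun y => max x y) volume x b :=
    (continuous_const.max continuous_id).intervalIntegrable _ _
  rw [← integral_add_adjacent_intervals h1 h2]
  have e1 : ∫ y in a..x, max x y = ∫ y in a..x, (x : ℝ) := by
    apply integral_congr
    intro y hy
    rw [Set.uIcc_of_le hax] at hy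
    exact max_eq_left hy.2
  have e2 : ∫ y in x..b, max x y = ∫ y in x..b, y := by
    apply integral_congr
    intro y hy
    rw [Set.uIcc_of_le hxb] at hy
    exact max_eq_right hy.1
  rw [e1, e2, integral_id, _root_.intervalIntegral.integral_const]
  simp only [smul_eq_mul]
  ring

theorem J_mean_is_mean (M : ℝ → ℝ → ℝ)
    (hMmean : ∀ x y : ℝ, 0 < x → 0 < y → min x y ≤ M x y ∧ M x y ≤ max x y)
    (hMsymm : ∀ x y : ℝ, 0 < x → 0 < y → M x y = M y x)
    (a b : ℝ) (ha : 0 < a) (hab : a < b)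
    (hint : IntegrableOn (fun p : ℝ × ℝ => M p.1 p.2)
      (Set.Icc a b ×ˢ Set.Icc a b) volume)
    (hint' : ∀ x : ℝ, x ∈ Set.Icc a b → IntervalIntegrable (fun y => M x y) volume a b)
    (hint'' : IntervalIntegrable (fun x => ∫ y in a..b, M x y) volume a b) :
    a ≤ 3 * ((1 / (b - a)^2) * ∫ x in a..b, ∫ y in a..b, M x y) - (a + b) ∧
    3 * ((1 / (b - a)^2) * ∫ x in a..b, ∫ y in a..b, M x y) - (a + b) ≤ b := by
  set D := ∫ x in a..b, ∫ y in a..b, M x y with hD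
  -- lower bound on inner integral
  have hlow : ∀ x ∈ Set.Icc a b, (-x^2/2 + b*x - a^2/2) ≤ ∫ y in a..b, M x y := by
    intro x hx
    rw [← inner_min_eval a b x hx.1 hx.2]
    apply integral_mono_on hab.le
      ((continuous_const.min continuous_id).intervalIntegrable _ _) (hint' x hx)
    intro y hy
    exact (hMmean x y (lt_of_lt_of_le ha hx.1) (lt_of_lt_of_le ha hy.1)).1
  have hhigh : ∀ x ∈ Set.Icc a b, (∫ y in a..b, M x y) ≤ x^2/2 - a*x + b^2/2 := by
    intro x hx
    rw [← inner_max_eval a b x hx.1 hx.2]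
    apply integral_mono_on hab.le (hint' x hx)
      ((continuous_const.max continuous_id).intervalIntegrable _ _)
    intro y hy
    exact (hMmean x y (lt_of_lt_of_le ha hx.1) (lt_of_lt_of_le ha hy.1)).2
  have hcontL : IntervalIntegrable (fun x : ℝ => -x^2/2 + b*x - a^2/2) volume a b := by
    exact (by fun_prop : Continuous _).intervalIntegrable _ _
  have hcontU : IntervalIntegrable (fun x : ℝ => x^2/2 - a*x + b^2/2) volume a b := by
    exact (by fun_prop : Continuous _).intervalIntegrable _ _
  have hLD : (∫ x in a..b, (-x^2/2 + b*x - a^2/2)) ≤ D :=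
    integral_mono_on hab.le hcontL hint'' hlow
  have hDU : D ≤ ∫ x in a..b, (x^2/2 - a*x + b^2/2) :=
    integral_mono_on hab.le hint'' hcontU hhigh
  have hsq : ∫ x in a..b, x^2 = (b^3 - a^3)/3 := by
    simp [integral_pow]; norm_num
  have hid : ∫ x in a..b, x = (b^2 - a^2)/2 := by
    rw [integral_id]
  have hLval : (∫ x in a..b, (-x^2/2 + b*x - a^2/2)) = (b-a)^2*(2*a+b)/3 := by
    have h1 : IntervalIntegrable (fun x : ℝ => -x^2/2 + b*x) volume a b := by
      exact (by fun_prop : Continuous _).intervalIntegrable _ _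
    have h2 : IntervalIntegrable (fun x : ℝ => a^2/2) volume a b := by
      exact (by fun_prop : Continuous _).intervalIntegrable _ _
    have h3 : IntervalIntegrable (fun x : ℝ => -x^2/2) volume a b := by
      exact (by fun_prop : Continuous _).intervalIntegrable _ _
    have h4 : IntervalIntegrable (fun x : ℝ => b*x) volume a b := by
      exact (by fun_prop : Continuous _).intervalIntegrable _ _
    have e : (fun x : ℝ => -x^2/2 + b*x - a^2/2)
        = fun x : ℝ => (-x^2/2 + b*x) - a^2/2 := rfl
    rw [e, integral_sub h1 h2, integral_add h3 h4]
    have e3 : (fun x : ℝ => -x^2/2) = fun x : ℝ => (-(1:ℝ)/2) * x^2 := by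
      funext x; ring
    rw [e3, intervalIntegral.integral_const_mul, hsq,
      intervalIntegral.integral_const_mul, hid, _root_.intervalIntegral.integral_const]
    simp only [smul_eq_mul]
    ring
  have hUval : (∫ x in a..b, (x^2/2 - a*x + b^2/2)) = (b-a)^2*(a+2*b)/3 := by
    have h1 : IntervalIntegrable (fun x : ℝ => x^2/2 - a*x) volume a b := by
      exact (by fun_prop : Continuous _).intervalIntegrable _ _
    have h2 : IntervalIntegrable (fun x : ℝ => b^2/2) volume a b := by
      exact (by fun_prop : Continuous _).intervalIntegrable _ _
    have h3 : IntervalIntegrable (fun x : ℝ => x^2/2) volume a b := by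
      exact (by fun_prop : Continuous _).intervalIntegrable _ _
    have h4 : IntervalIntegrable (fun x : ℝ => a*x) volume a b := by
      exact (by fun_prop : Continuous _).intervalIntegrable _ _
    have e : (fun x : ℝ => x^2/2 - a*x + b^2/2)
        = fun x : ℝ => (x^2/2 - a*x) + b^2/2 := rfl
    rw [e, integral_add h1 h2, integral_sub h3 h4]
    have e3 : (fun x : ℝ => x^2/2) = fun x : ℝ => ((1:ℝ)/2) * x^2 := by
      funext x; ring
    rw [e3, intervalIntegral.integral_const_mul, hsq,
      intervalIntegral.integral_const_mul, hid, _root_.intervalIntegral.integral_const]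
    simp only [smul_eq_mul]
    ring
  rw [hLval] at hLD
  rw [hUval] at hDU
  have hba : (0:ℝ) < (b - a)^2 := pow_pos (sub_pos.2 hab) 2
  have hE : (1 / (b - a)^2) * D = D / (b-a)^2 := by ring
  constructor
  · rw [hE]
    rw [← sub_nonneg]
    have : 3 * (D / (b-a)^2) - (a+b) - a = (3*D - (2*a+b)*(b-a)^2) / (b-a)^2 := by
      field_simp [(sub_pos.2 hab).ne']; ring
    rw [this]
    apply div_nonneg _ hba.le
    nlinarith [hLD]
  · rw [hE, ← sub_nonneg]
    have : b - (3 * (D / (b-a)^2) - (a+b)) = ((a+2*b)*(b-a)^2 - 3*D) / (b-a)^2 := by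
      field_simp [(sub_pos.2 hab).ne']; ring
    rw [this]
    apply div_nonneg _ hba.le
    nlinarith [hDU]
end

section
/- If M is an integrable mean function and 0 < a < b, then (2/3)·A(a,b) < I_M(a,b) < (4/3)·A(a,b), where A(a,b) = (a+b)/2 and I_M(a,b) = (1/(b−a)²)·∫ₐᵇ∫ₐᵇ M(x,y) dx dy. -/
open MeasureTheory intervalIntegral

lemma inner_min_eq (a b x : ℝ) (hx : x ∈ Set.Icc a b) :
    ∫ y in a..b, min x y = (x^2 - a^2)/2 + x*(b - x) := by
  obtain ⟨hax, hxb⟩ := hx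
  have h1 : IntervalIntegrable (fun y => min x y) volume a x :=
    (continuous_const.min continuous_id).intervalIntegrable _ _
  have h2 : IntervalIntegrable (fun y => min x y) volume x b :=
    (continuous_const.min continuous_id).intervalIntegrable _ _
  rw [← integral_add_adjacent_intervals h1 h2]
  have e1 : ∫ y in a..x, min x y = ∫ y in a..x, y := by
    apply integral_congr
    intro y hy
    rw [Set.uIcc_of_le hax] at hy
    exact min_eq_right hy.2
  have e2 : ∫ y in x..b, min x y = ∫ y in x..b, x := by
    apply integral_congr
    intro y hy
    rw [Set.uIcc_of_le hxb] at hy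
    exact min_eq_left hy.1
  rw [e1, e2, integral_id, intervalIntegral.integral_const, smul_eq_mul]
  ring

lemma inner_max_eq (a b x : ℝ) (hx : x ∈ Set.Icc a b) :
    ∫ y in a..b, max x y = x*(x - a) + (b^2 - x^2)/2 := by
  obtain ⟨hax, hxb⟩ := hx
  have h1 : IntervalIntegrable (fun y => max x y) volume a x :=
    (continuous_const.max continuous_id).intervalIntegrable _ _
  have h2 : IntervalIntegrable (fun y => max x y) volume x b :=
    (continuous_const.max continuous_id).intervalIntegrable _ _
  rw [← integral_add_adjacent_intervals h1 h2]
  have e1 : ∫ y in a..x, max x y = ∫ y in a..x, x := by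
    apply integral_congr
    intro y hy
    rw [Set.uIcc_of_le hax] at hy
    exact max_eq_left hy.2
  have e2 : ∫ y in x..b, max x y = ∫ y in x..b, y := by
    apply integral_congr
    intro y hy
    rw [Set.uIcc_of_le hxb] at hy
    exact max_eq_right hy.1
  rw [e1, e2, integral_id, intervalIntegral.integral_const, smul_eq_mul]
  ring

lemma outer_min_eq (a b : ℝ) :
    ∫ x in a..b, ((x^2 - a^2)/2 + x*(b - x)) = (b-a)^2*a + (b-a)^3/3 := by
  have h : ∀ x : ℝ, HasDerivAt (fun t : ℝ => -(t^3/6) + b*t^2/2 - a^2*t^1/2)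
      ((x^2 - a^2)/2 + x*(b - x)) x := by
    intro x
    have := (((hasDerivAt_pow 3 x).div_const 6).neg.add
      (((hasDerivAt_pow 2 x).const_mul b).div_const 2)).sub
      (((hasDerivAt_pow 1 x).const_mul (a^2)).div_const 2)
    refine this.congr_deriv ?_
    norm_num
    ring
  rw [integral_eq_sub_of_hasDerivAt (fun x _ => h x)
    (by apply Continuous.intervalIntegrable; fun_prop)]
  ring

lemma outer_max_eq (a b : ℝ) :
    ∫ x in a..b, (x*(x - a) + (b^2 - x^2)/2) = (b-a)^2*a + 2*(b-a)^3/3 := by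
  have h : ∀ x : ℝ, HasDerivAt (fun t : ℝ => t^3/6 - a*t^2/2 + b^2*t^1/2)
      (x*(x - a) + (b^2 - x^2)/2) x := by
    intro x
    have := (((hasDerivAt_pow 3 x).div_const 6).sub
      (((hasDerivAt_pow 2 x).const_mul a).div_const 2)).add
      (((hasDerivAt_pow 1 x).const_mul (b^2)).div_const 2)
    refine this.congr_deriv ?_
    norm_num
    ring
  rw [integral_eq_sub_of_hasDerivAt (fun x _ => h x)
    (by apply Continuous.intervalIntegrable; fun_prop)]
  ring

theorem I_mean_bounds (M : ℝ → ℝ → ℝ)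
    (hMmean : ∀ x y : ℝ, 0 < x → 0 < y → min x y ≤ M x y ∧ M x y ≤ max x y)
    (hMsymm : ∀ x y : ℝ, 0 < x → 0 < y → M x y = M y x)
    (a b : ℝ) (ha : 0 < a) (hab : a < b)
    (hint : IntegrableOn (fun p : ℝ × ℝ => M p.1 p.2)
      (Set.Icc a b ×ˢ Set.Icc a b) volume)
    (hint' : ∀ x : ℝ, x ∈ Set.Icc a b → IntervalIntegrable (fun y => M x y) volume a b)
    (hint'' : IntervalIntegrable (fun x => ∫ y in a..b, M x y) volume a b) :
    (2/3) * ((a + b) / 2) < (1 / (b - a)^2) * (∫ x in a..b, ∫ y in a..b, M x y) ∧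
    (1 / (b - a)^2) * (∫ x in a..b, ∫ y in a..b, M x y) < (4/3) * ((a + b) / 2) := by
  have hc : 0 < b - a := sub_pos.2 hab
  -- pointwise positivity on [a,b]
  have hpos : ∀ x : ℝ, x ∈ Set.Icc a b → 0 < x := fun x hx => lt_of_lt_of_le ha hx.1
  -- inner integral bounds
  have hlow : ∀ x ∈ Set.Icc a b,
      (x^2 - a^2)/2 + x*(b - x) ≤ ∫ y in a..b, M x y := by
    intro x hx
    rw [← inner_min_eq a b x hx]
    apply integral_mono_on hab.le
      ((continuous_const.min continuous_id).intervalIntegrable _ _) (hint' x hx)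
    intro y hy
    exact (hMmean x y (hpos x hx) (hpos y hy)).1
  have hhigh : ∀ x ∈ Set.Icc a b,
      (∫ y in a..b, M x y) ≤ x*(x - a) + (b^2 - x^2)/2 := by
    intro x hx
    rw [← inner_max_eq a b x hx]
    apply integral_mono_on hab.le (hint' x hx)
      ((continuous_const.max continuous_id).intervalIntegrable _ _)
    intro y hy
    exact (hMmean x y (hpos x hx) (hpos y hy)).2
  -- outer integral bounds
  have hL : (b-a)^2*a + (b-a)^3/3 ≤ ∫ x in a..b, ∫ y in a..b, M x y := by
    rw [← outer_min_eq a b]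
    exact integral_mono_on hab.le
      (by apply Continuous.intervalIntegrable; fun_prop) hint'' hlow
  have hH : (∫ x in a..b, ∫ y in a..b, M x y) ≤ (b-a)^2*a + 2*(b-a)^3/3 := by
    rw [← outer_max_eq a b]
    exact integral_mono_on hab.le hint''
      (by apply Continuous.intervalIntegrable; fun_prop) hhigh
  have hc2 : (0:ℝ) < (b - a)^2 := by positivity
  constructor
  · rw [one_div, inv_mul_eq_div, lt_div_iff₀ hc2]
    nlinarith
  · rw [one_div, inv_mul_eq_div, div_lt_iff₀ hc2]
    nlinarith
end

section
/- For 0 < a < b, (2/(b−a)²)·∫ₐᵇ∫ₐᵇ (xy/(x+y)) dx dy = (4/3)·(2A + (1/(b−a)²)·(a³·ln(A/a) + b³·ln(A/b))), where A = (a+b)/2. -/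
open intervalIntegral

lemma aux_hasDerivAt (c x : ℝ) (hx : 0 < x + c) :
    HasDerivAt (fun x : ℝ => (x^3 + c^3)/3 * Real.log (x + c)
      - (1/3)*(x^3/3 - c*x^2/2 + c^2*x)) (x^2 * Real.log (x + c)) x := by
  have h1 : HasDerivAt (fun x : ℝ => x + c) 1 x := by
    simpa using (hasDerivAt_id x).add_const c
  have hlog : HasDerivAt (fun x : ℝ => Real.log (x + c)) (1/(x+c)) x := by
    have := (Real.hasDerivAt_log hx.ne').comp x h1
    exact this.congr_deriv (by simp)
  have hp : HasDerivAt (fun x : ℝ => (x^3 + c^3)/3) (x^2) x := by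
    have := ((hasDerivAt_pow 3 x).add_const (c^3)).div_const 3
    exact this.congr_deriv (by norm_num)
  have hq : HasDerivAt (fun x : ℝ => (1/3)*(x^3/3 - c*x^2/2 + c^2*x))
      ((1/3)*(x^2 - c*x + c^2)) x := by
    have h3 : HasDerivAt (fun x : ℝ => x^3/3) (x^2) x := by
      have := (hasDerivAt_pow 3 x).div_const 3
      exact this.congr_deriv (by norm_num)
    have h4 : HasDerivAt (fun x : ℝ => c*x^2/2) (c*x) x := by
      have := ((hasDerivAt_pow 2 x).const_mul c).div_const 2
      exact this.congr_deriv (by norm_num; ring)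
    have h5 : HasDerivAt (fun x : ℝ => c^2*x) (c^2) x := by
      simpa using (hasDerivAt_id x).const_mul (c^2)
    exact ((h3.sub h4).add h5).const_mul (1/3)
  have := (hp.mul hlog).sub hq
  exact this.congr_deriv (by field_simp; ring)

theorem integral_harmonic_mean (a b : ℝ) (ha : 0 < a) (hab : a < b) :
    (2 / (b - a)^2) * (∫ x in a..b, ∫ y in a..b, x * y / (x + y)) =
      (4/3) * (2 * ((a + b) / 2) + (1 / (b - a)^2) *
        (a^3 * Real.log (((a + b) / 2) / a) + b^3 * Real.log (((a + b) / 2) / b))) := by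
  have hb : 0 < b := ha.trans hab
  have hinner : ∀ x ∈ Set.uIcc a b,
      (∫ y in a..b, x * y / (x + y))
        = x*(b-a) - x^2*(Real.log (x+b) - Real.log (x+a)) := by
    intro x hx
    rw [Set.uIcc_of_le hab.le] at hx
    have hxa : 0 < x := lt_of_lt_of_le ha hx.1
    have key : ∀ y ∈ Set.uIcc a b,
        HasDerivAt (fun y => x*y - x^2 * Real.log (x+y)) (x*y/(x+y)) y := by
      intro y hy
      rw [Set.uIcc_of_le hab.le] at hy
      have hxy : 0 < x + y := by linarith [hy.1]
      have h1 : HasDerivAt (fun y : ℝ => x + y) 1 y := by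
        simpa using (hasDerivAt_id y).const_add x
      have h2 : HasDerivAt (fun y : ℝ => Real.log (x+y)) (1/(x+y)) y := by
        exact ((Real.hasDerivAt_log hxy.ne').comp y h1).congr_deriv (by simp)
      have h3 : HasDerivAt (fun y : ℝ => x*y) x y := by
        simpa using (hasDerivAt_id y).const_mul x
      have := h3.sub (h2.const_mul (x^2))
      exact this.congr_deriv (by field_simp; ring)
    have hint : IntervalIntegrable (fun y => x*y/(x+y)) MeasureTheory.volume a b := by
      apply ContinuousOn.intervalIntegrable
      apply ContinuousOn.div
      · exact (continuous_const.mul continuous_id).continuousOn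
      · exact (continuous_const.add continuous_id).continuousOn
      · intro y hy
        rw [Set.uIcc_of_le hab.le] at hy
        have : 0 < x + y := by linarith [hy.1]
        exact this.ne'
    rw [integral_eq_sub_of_hasDerivAt key hint]
    ring
  rw [integral_congr hinner]
  set G : ℝ → ℝ := fun x =>
    (b-a)*x^2/2
    - ((x^3 + b^3)/3 * Real.log (x + b) - (1/3)*(x^3/3 - b*x^2/2 + b^2*x))
    + ((x^3 + a^3)/3 * Real.log (x + a) - (1/3)*(x^3/3 - a*x^2/2 + a^2*x)) with hG
  have keyG : ∀ x ∈ Set.uIcc a b,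
      HasDerivAt G (x*(b-a) - x^2*(Real.log (x+b) - Real.log (x+a))) x := by
    intro x hx
    rw [Set.uIcc_of_le hab.le] at hx
    have hxb : 0 < x + b := by linarith [hx.1]
    have hxa : 0 < x + a := by linarith [hx.1]
    have h1 : HasDerivAt (fun x : ℝ => (b-a)*x^2/2) ((b-a)*x) x := by
      have := ((hasDerivAt_pow 2 x).const_mul (b-a)).div_const 2
      exact this.congr_deriv (by norm_num; ring)
    have h2 := aux_hasDerivAt b x hxb
    have h3 := aux_hasDerivAt a x hxa
    have := (h1.sub h2).add h3
    exact this.congr_deriv (by ring)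
  have hcont : IntervalIntegrable
      (fun x => x*(b-a) - x^2*(Real.log (x+b) - Real.log (x+a)))
      MeasureTheory.volume a b := by
    apply ContinuousOn.intervalIntegrable
    apply ContinuousOn.sub
    · exact (continuous_id.mul continuous_const).continuousOn
    · apply ContinuousOn.mul (continuous_pow 2).continuousOn
      apply ContinuousOn.sub
      · apply ContinuousOn.log (continuous_id.add continuous_const).continuousOn
        intro x hx
        rw [Set.uIcc_of_le hab.le] at hx
        have : 0 < x + b := by linarith [hx.1]
        exact this.ne'
      · apply ContinuousOn.log (continuous_id.add continuous_const).continuousOn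
        intro x hx
        rw [Set.uIcc_of_le hab.le] at hx
        have : 0 < x + a := by linarith [hx.1]
        exact this.ne'
  rw [integral_eq_sub_of_hasDerivAt keyG hcont, hG]
  simp only
  have hba : b - a ≠ 0 := by linarith
  have hab2 : (0:ℝ) < a + b := by linarith
  have e1 : Real.log (b + b) = Real.log 2 + Real.log b := by
    rw [show b + b = 2*b by ring, Real.log_mul (by norm_num) hb.ne']
  have e2 : Real.log (a + a) = Real.log 2 + Real.log a := by
    rw [show a + a = 2*a by ring, Real.log_mul (by norm_num) ha.ne']
  have e3 : Real.log (b + a) = Real.log (a + b) := by rw [add_comm]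
  have e4 : Real.log ((a + b)/2 / a) = Real.log (a+b) - Real.log 2 - Real.log a := by
    rw [Real.log_div (by positivity) ha.ne', Real.log_div hab2.ne' (by norm_num)]
  have e5 : Real.log ((a + b)/2 / b) = Real.log (a+b) - Real.log 2 - Real.log b := by
    rw [Real.log_div (by positivity) hb.ne', Real.log_div hab2.ne' (by norm_num)]
  rw [e1, e2, e3, e4, e5]
  field_simp
  ring
end

section
/- For 0 < a < b, (8/9)·A(a,b) < (2(b^{3/2} − a^{3/2})/(3(b−a)))² < A(a,b), where A(a,b) = (a+b)/2; moreover 8/9 is the best (infimum) lower constant. -/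
lemma rpow32 (x : ℝ) (hx : 0 ≤ x) : x ^ ((3:ℝ)/2) = Real.sqrt x ^ 3 := by
  rw [Real.sqrt_eq_rpow, ← Real.rpow_natCast (x ^ ((1:ℝ)/2)) 3, ← Real.rpow_mul hx]
  norm_num

lemma ratio_eq (s t : ℝ) (hs : 0 < s) (hst : s < t) :
    2*(t^3 - s^3)/(3*(t^2 - s^2)) = 2*(s^2 + s*t + t^2)/(3*(s+t)) := by
  have h1 : t - s ≠ 0 := sub_ne_zero.mpr (ne_of_lt hst).symm
  have h2 : s + t ≠ 0 := by nlinarith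
  have h3 : t^2 - s^2 ≠ 0 := by nlinarith
  field_simp
  ring

lemma key (s t : ℝ) (hs : 0 < s) (hst : s < t) :
    (8/9) * ((s^2 + t^2) / 2) < (2*(s^2 + s*t + t^2)/(3*(s+t)))^2 ∧
    (2*(s^2 + s*t + t^2)/(3*(s+t)))^2 < (s^2 + t^2) / 2 := by
  have ht : 0 < t := hs.trans hst
  have hpos : (0:ℝ) < (3*(s+t))^2 := by positivity
  have hne : s - t ≠ 0 := sub_ne_zero.mpr (ne_of_lt hst)
  have hsq : 0 < (s-t)^2 := by positivity
  rw [div_pow]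
  constructor
  · rw [lt_div_iff₀ hpos]
    nlinarith [mul_pos (mul_pos hs ht) (mul_pos hs ht), mul_pos hs ht, sq_nonneg (s*t)]
  · rw [div_lt_iff₀ hpos]
    nlinarith [mul_pos hsq (mul_pos (mul_pos hs ht) (by positivity : (0:ℝ) < 4)),
      mul_pos hsq (mul_pos hs ht), sq_nonneg (s+t), mul_pos hs ht]

theorem IG_bounds_best (a b : ℝ) (ha : 0 < a) (hab : a < b) :
    ((8/9) * ((a + b) / 2) < (2 * (b ^ ((3:ℝ)/2) - a ^ ((3:ℝ)/2)) / (3 * (b - a)))^2 ∧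
     (2 * (b ^ ((3:ℝ)/2) - a ^ ((3:ℝ)/2)) / (3 * (b - a)))^2 < (a + b) / 2) ∧
    ∀ ε : ℝ, 0 < ε → ∃ a' b' : ℝ, 0 < a' ∧ a' < b' ∧
      (2 * (b' ^ ((3:ℝ)/2) - a' ^ ((3:ℝ)/2)) / (3 * (b' - a')))^2 <
        (8/9 + ε) * ((a' + b') / 2) := by
  constructor
  · set s := Real.sqrt a with hsdef
    set t := Real.sqrt b with htdef
    have hs : 0 < s := Real.sqrt_pos.mpr ha
    have ht : 0 < t := Real.sqrt_pos.mpr (ha.trans hab)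
    have hst : s < t := Real.sqrt_lt_sqrt ha.le hab
    have has : a = s^2 := (Real.sq_sqrt ha.le).symm
    have hbt : b = t^2 := (Real.sq_sqrt (ha.trans hab).le).symm
    have h1 : a ^ ((3:ℝ)/2) = s^3 := rpow32 a ha.le
    have h2 : b ^ ((3:ℝ)/2) = t^3 := rpow32 b (ha.trans hab).le
    rw [h1, h2]
    rw [show b - a = t^2 - s^2 by rw [has, hbt]]
    rw [ratio_eq s t hs hst]
    rw [show a + b = s^2 + t^2 by rw [has, hbt]]
    exact key s t hs hst
  · intro ε hε
    set r := min ε 1 / 4 with hrdef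
    have hr0 : 0 < r := by
      have := lt_min hε one_pos
      positivity
    have hr1 : r ≤ 1/4 := by
      have : min ε 1 ≤ 1 := min_le_right _ _
      simp only [hrdef]; linarith
    have hre : r ≤ ε/4 := by
      have : min ε 1 ≤ ε := min_le_left _ _
      simp only [hrdef]; linarith
    refine ⟨r^2, 1, by positivity, by nlinarith, ?_⟩
    have h1 : (1:ℝ) ^ ((3:ℝ)/2) = 1 := Real.one_rpow _
    have h2 : (r^2) ^ ((3:ℝ)/2) = r^3 := by
      rw [rpow32 _ (by positivity), Real.sqrt_sq hr0.le]
    rw [h1, h2]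
    have hr1' : r < 1 := by linarith
    have heq : 2 * (1 - r^3) / (3 * (1 - r^2)) = 2*(r^2 + r*1 + 1^2)/(3*(r+1)) := by
      have := ratio_eq r 1 hr0 hr1'
      norm_num at this ⊢
      convert this using 2 <;> ring
    rw [heq]
    have hpos : (0:ℝ) < (3*(r+1))^2 := by positivity
    rw [div_pow, div_lt_iff₀ hpos]
    have hA : (r^2+r+1)^2 - r^2 ≥ 1 := by nlinarith
    have hB : 4*r^2 ≤ ε/4 := by nlinarith [mul_le_mul hre hr1 hr0.le (by linarith : (0:ℝ) ≤ ε/4)]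
    have hC : 9*ε/2 * ((r^2+r+1)^2 - r^2) ≥ 9*ε/2 * 1 :=
      mul_le_mul_of_nonneg_left hA (by linarith)
    nlinarith [hC, hB]
end

section
/- For t > 1, the function f(t) = 8(t²+t+1)²/(9(t²+1)(t+1)²) is strictly decreasing, and 8/9 < f(t) < 1. -/
theorem f1_strict_anti_and_bounds :
    StrictAntiOn (fun t : ℝ => 8 * (t^2 + t + 1)^2 / (9 * (t^2 + 1) * (t + 1)^2))
      (Set.Ioi 1) ∧
    ∀ t : ℝ, 1 < t →
      8/9 < 8 * (t^2 + t + 1)^2 / (9 * (t^2 + 1) * (t + 1)^2) ∧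
      8 * (t^2 + t + 1)^2 / (9 * (t^2 + 1) * (t + 1)^2) < 1 := by
  constructor
  · intro a ha b hb hab
    simp only [Set.mem_Ioi] at ha hb
    have ha0 : (0:ℝ) < a := lt_trans one_pos ha
    have hb0 : (0:ℝ) < b := lt_trans one_pos hb
    have hda : (0:ℝ) < 9 * (a^2 + 1) * (a + 1)^2 := by positivity
    have hdb : (0:ℝ) < 9 * (b^2 + 1) * (b + 1)^2 := by positivity
    simp only
    rw [div_lt_div_iff₀ hdb hda]
    have h1 : (0:ℝ) < b - a := by linarith
    have h2 : (0:ℝ) < a * b - 1 := by nlinarith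
    have h3 : (0:ℝ) < a * (b^2 + 1) + b * (a^2 + 1) + 2 * (a * b) := by positivity
    nlinarith [mul_pos (mul_pos h1 h2) h3]
  · intro t ht
    have hd : (0:ℝ) < 9 * (t^2 + 1) * (t + 1)^2 := by positivity
    constructor
    · rw [div_lt_div_iff₀ (by norm_num) hd]
      nlinarith [sq_nonneg t, sq_nonneg (t-1)]
    · rw [div_lt_one hd]
      have h1 : (0:ℝ) < (t-1)^2 := pow_pos (by linarith) 2
      have h2 : (0:ℝ) < t^2 + 4*t + 1 := by nlinarith
      nlinarith [mul_pos h1 h2]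
end

section
/- For t > 1, the function f₂(t) = (8/3)·(1 + ((t³+1)·ln((t+1)/2) − t³·ln t)/((t−1)²(t+1))) is strictly decreasing, with (8(1−ln 2))/3 < f₂(t) < 1. -/
open Real Set

lemma HasDerivAt.cv {f g : ℝ → ℝ} {a b x : ℝ} (h : HasDerivAt f a x) (hf : f = g)
    (hab : a = b) : HasDerivAt g b x := by
  subst hf hab; exact h

/-- base helper: negative on Ioi 1 from zero at 1 and negative derivative -/
lemma aux_neg {f f' : ℝ → ℝ} (hf : ∀ x : ℝ, 1 ≤ x → HasDerivAt f (f' x) x)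
    (hneg : ∀ x : ℝ, 1 < x → f' x < 0) (h1 : f 1 = 0) {t : ℝ} (ht : 1 < t) : f t < 0 := by
  have hA : StrictAntiOn f (Set.Ici 1) := by
    apply strictAntiOn_of_deriv_neg (convex_Ici 1)
    · exact fun x hx => (hf x hx).continuousAt.continuousWithinAt
    · intro x hx
      rw [interior_Ici] at hx
      rw [(hf x hx.le).deriv]
      exact hneg x hx
  have := hA Set.self_mem_Ici (le_of_lt ht) ht
  rwa [h1] at this

lemma aux_pos {f f' : ℝ → ℝ} (hf : ∀ x : ℝ, 1 ≤ x → HasDerivAt f (f' x) x)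
    (hpos : ∀ x : ℝ, 1 < x → 0 < f' x) (h1 : f 1 = 0) {t : ℝ} (ht : 1 < t) : 0 < f t := by
  have hA : StrictMonoOn f (Set.Ici 1) := by
    apply strictMonoOn_of_deriv_pos (convex_Ici 1)
    · exact fun x hx => (hf x hx).continuousAt.continuousWithinAt
    · intro x hx
      rw [interior_Ici] at hx
      rw [(hf x hx.le).deriv]
      exact hpos x hx
  have := hA Set.self_mem_Ici (le_of_lt ht) ht
  rwa [h1] at this

lemma hasDerivAt_L {t : ℝ} (ht : 0 < t) :
    HasDerivAt (fun x : ℝ => Real.log ((x + 1) / 2)) (1 / (t + 1)) t := by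
  have h1 : HasDerivAt (fun x : ℝ => (x + 1) / 2) (1 / 2) t :=
    ((hasDerivAt_id t).add_const 1).div_const 2
  have h2 := (Real.hasDerivAt_log (by positivity : ((t + 1) / 2 : ℝ) ≠ 0)).comp t h1
  refine HasDerivAt.cv h2 (by rfl) ?_
  field_simp

-- k' t = log t - L t + 1/t - 1, negative on Ioi 1
lemma kp_neg {t : ℝ} (ht : 1 < t) :
    Real.log t - Real.log ((t + 1) / 2) + 1 / t - 1 < 0 := by
  have h0 : (0:ℝ) < t := by linarith
  apply aux_neg (f' := fun x => 1 / x - 1 / (x + 1) - 1 / x ^ 2)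
    (fun x hx => ?_) (fun x hx => ?_) (by norm_num) ht
  · have hx0 : (0:ℝ) < x := by linarith
    have hd : HasDerivAt (fun y : ℝ => Real.log y - Real.log ((y + 1) / 2) + 1 / y - 1)
        (1 / x - 1 / (x + 1) + (-(1 / x ^ 2))) x := by
      have h1 := Real.hasDerivAt_log (ne_of_gt hx0)
      have h2 := hasDerivAt_L hx0
      have h3 : HasDerivAt (fun y : ℝ => 1 / y) (-(1 / x ^ 2)) x := by
        simpa using (hasDerivAt_inv (ne_of_gt hx0))
      simpa [one_div] using ((h1.sub h2).add h3).sub_const 1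
    exact hd
  · have hx0 : (0:ℝ) < x := by linarith
    have key : 1 / x - 1 / (x + 1) - 1 / x ^ 2 = -(1 / (x ^ 2 * (x + 1))) := by
      field_simp
      ring
    rw [key]
    simp only [neg_lt, neg_zero] at *
    positivity

lemma k_neg {t : ℝ} (ht : 1 < t) :
    (t + 1) * (Real.log t - Real.log ((t + 1) / 2)) - (t - 1) < 0 := by
  apply aux_neg
    (f' := fun x => Real.log x - Real.log ((x + 1) / 2) + 1 / x - 1)
    (fun x hx => ?_) (fun x hx => kp_neg hx) (by norm_num) ht
  have hx0 : (0:ℝ) < x := by linarith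
  have h1 := Real.hasDerivAt_log (ne_of_gt hx0)
  have h2 := hasDerivAt_L hx0
  have hd := ((hasDerivAt_id x).add_const 1).mul (h1.sub h2)
  have hd2 := hd.sub (((hasDerivAt_id x).sub_const 1))
  refine HasDerivAt.cv hd2 (by rfl) ?_
  simp only [Pi.add_apply, Pi.sub_apply, Pi.mul_apply, id_eq]
  field_simp
  ring

lemma h1_neg {t : ℝ} (ht : 1 < t) :
    -3 * (t + 1) ^ 2 * Real.log ((t + 1) / 2) + 3 * t * (t + 2) * Real.log t
      - 3 * t * (t - 1) < 0 := by
  apply aux_neg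
    (f' := fun x => 6 * ((x + 1) * (Real.log x - Real.log ((x + 1) / 2)) - (x - 1)))
    (fun x hx => ?_) (fun x hx => by nlinarith [k_neg hx]) (by norm_num) ht
  have hx0 : (0:ℝ) < x := by linarith
  have hL := hasDerivAt_L hx0
  have hlog := Real.hasDerivAt_log (ne_of_gt hx0)
  have hpoly1 : HasDerivAt (fun y : ℝ => -3 * (y + 1) ^ 2) (-3 * (2 * (x + 1))) x := by
    have : HasDerivAt (fun y : ℝ => (y + 1) ^ 2) (2 * (x + 1)) x := by
      exact HasDerivAt.cv ((((hasDerivAt_id x).add_const 1).pow 2)) (by rfl) (by simp)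
    simpa [mul_comm, mul_assoc, mul_left_comm] using this.const_mul (-3)
  have hpoly2 : HasDerivAt (fun y : ℝ => 3 * y * (y + 2)) (6 * x + 6) x := by
    have : HasDerivAt (fun y : ℝ => 3 * y ^ 2 + 6 * y) (3 * (2 * x) + 6) x := by
      have a1 : HasDerivAt (fun y : ℝ => y ^ 2) (2 * x) x := by
        exact HasDerivAt.cv ((hasDerivAt_id x).pow 2) (by rfl) (by simp)
      exact HasDerivAt.cv ((a1.const_mul 3).add ((hasDerivAt_id x).const_mul 6)) (by rfl) (by simp)
    have heq : (fun y : ℝ => 3 * y * (y + 2)) = fun y : ℝ => 3 * y ^ 2 + 6 * y := by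
      funext y; ring
    rw [heq]; refine HasDerivAt.cv this (by rfl) ?_; ring
  have hpoly3 : HasDerivAt (fun y : ℝ => 3 * y * (y - 1)) (6 * x - 3) x := by
    have : HasDerivAt (fun y : ℝ => 3 * y ^ 2 - 3 * y) (3 * (2 * x) - 3) x := by
      have a1 : HasDerivAt (fun y : ℝ => y ^ 2) (2 * x) x := by
        exact HasDerivAt.cv ((hasDerivAt_id x).pow 2) (by rfl) (by simp)
      exact HasDerivAt.cv ((a1.const_mul 3).sub ((hasDerivAt_id x).const_mul 3)) (by rfl) (by simp)
    have heq : (fun y : ℝ => 3 * y * (y - 1)) = fun y : ℝ => 3 * y ^ 2 - 3 * y := by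
      funext y; ring
    rw [heq]; refine HasDerivAt.cv this (by rfl) ?_; ring
  have hd := ((hpoly1.mul hL).add (hpoly2.mul hlog)).sub hpoly3
  refine HasDerivAt.cv hd (by rfl) ?_
  field_simp
  ring

lemma h_neg {t : ℝ} (ht : 1 < t) :
    -(t + 1) ^ 3 * Real.log ((t + 1) / 2) + t ^ 2 * (t + 3) * Real.log t
      - (t - 1) ^ 2 * (t + 1) < 0 := by
  apply aux_neg
    (f' := fun x => -3 * (x + 1) ^ 2 * Real.log ((x + 1) / 2) + 3 * x * (x + 2) * Real.log x
      - 3 * x * (x - 1))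
    (fun x hx => ?_) (fun x hx => h1_neg hx) (by norm_num) ht
  have hx0 : (0:ℝ) < x := by linarith
  have hL := hasDerivAt_L hx0
  have hlog := Real.hasDerivAt_log (ne_of_gt hx0)
  have hpoly1 : HasDerivAt (fun y : ℝ => -(y + 1) ^ 3) (-(3 * (x + 1) ^ 2)) x := by
    have : HasDerivAt (fun y : ℝ => (y + 1) ^ 3) ((3:ℕ) * (x + 1) ^ 2) x := by
      exact HasDerivAt.cv ((((hasDerivAt_id x).add_const 1).pow 3)) (by rfl) (by simp)
    exact HasDerivAt.cv (this.neg) (by rfl) (by simp)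
  have hpoly2 : HasDerivAt (fun y : ℝ => y ^ 2 * (y + 3)) (3 * x ^ 2 + 6 * x) x := by
    have a1 : HasDerivAt (fun y : ℝ => y ^ 2) (2 * x) x := by
      exact HasDerivAt.cv ((hasDerivAt_id x).pow 2) (by rfl) (by simp)
    have := a1.mul ((hasDerivAt_id x).add_const 3)
    refine HasDerivAt.cv this (by rfl) ?_; simp only [id_eq]; ring
  have hpoly3 : HasDerivAt (fun y : ℝ => (y - 1) ^ 2 * (y + 1)) (3 * x ^ 2 - 2 * x - 1) x := by
    have a1 : HasDerivAt (fun y : ℝ => (y - 1) ^ 2) (2 * (x - 1)) x := by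
      exact HasDerivAt.cv ((((hasDerivAt_id x).sub_const 1).pow 2)) (by rfl) (by simp)
    have := a1.mul ((hasDerivAt_id x).add_const 1)
    refine HasDerivAt.cv this (by rfl) ?_; simp only [id_eq]; ring
  have hd := ((hpoly1.mul hL).add (hpoly2.mul hlog)).sub hpoly3
  refine HasDerivAt.cv hd (by rfl) ?_
  field_simp
  ring

lemma p3_neg {t : ℝ} (ht : 1 < t) :
    48 * (Real.log ((t + 1) / 2) - Real.log t) - 48 / (t + 1) - 24 / (t + 1) ^ 2 + 30 < 0 := by
  apply aux_neg
    (f' := fun x => 48 * (1 / (x + 1) - 1 / x) + 48 / (x + 1) ^ 2 + 48 / (x + 1) ^ 3)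
    (fun x hx => ?_) (fun x hx => ?_) (by norm_num) ht
  · have hx0 : (0:ℝ) < x := by linarith
    have hx1 : (0:ℝ) < x + 1 := by linarith
    have hL := hasDerivAt_L hx0
    have hlog := Real.hasDerivAt_log (ne_of_gt hx0)
    have hinv : HasDerivAt (fun y : ℝ => 48 / (y + 1)) (-(48 / (x + 1) ^ 2)) x := by
      have := (hasDerivAt_inv (ne_of_gt hx1)).comp x ((hasDerivAt_id x).add_const 1)
      have h2 := this.const_mul 48
      refine HasDerivAt.cv h2 (by rfl) ?_
      ring
    have hinv2 : HasDerivAt (fun y : ℝ => 24 / (y + 1) ^ 2) (-(48 / (x + 1) ^ 3)) x := by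
      have hsq : HasDerivAt (fun y : ℝ => (y + 1) ^ 2) (2 * (x + 1)) x := by
        exact HasDerivAt.cv ((((hasDerivAt_id x).add_const 1).pow 2)) (by rfl) (by simp)
      have := (hasDerivAt_inv (by positivity : ((x+1)^2 : ℝ) ≠ 0)).comp x hsq
      have h2 := this.const_mul 24
      refine HasDerivAt.cv h2 (by rfl) ?_
      field_simp
      ring
    have hd := ((((hL.sub hlog).const_mul 48).sub hinv).sub hinv2).add_const 30
    refine HasDerivAt.cv hd (by rfl) ?_
    field_simp
    ring
  · have hx0 : (0:ℝ) < x := by linarith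
    have key : 48 * (1 / (x + 1) - 1 / x) + 48 / (x + 1) ^ 2 + 48 / (x + 1) ^ 3
        = -(48 / (x * (x + 1) ^ 3)) := by
      field_simp
      ring
    rw [key, neg_lt, neg_zero]
    positivity

lemma p2_neg {t : ℝ} (ht : 1 < t) :
    48 * t * (Real.log ((t + 1) / 2) - Real.log t) - 24 * t / (t + 1) + 30 * t - 18 < 0 := by
  apply aux_neg
    (f' := fun x => 48 * (Real.log ((x + 1) / 2) - Real.log x) - 48 / (x + 1)
      - 24 / (x + 1) ^ 2 + 30)
    (fun x hx => ?_) (fun x hx => p3_neg hx) (by norm_num) ht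
  have hx0 : (0:ℝ) < x := by linarith
  have hx1 : (0:ℝ) < x + 1 := by linarith
  have hL := hasDerivAt_L hx0
  have hlog := Real.hasDerivAt_log (ne_of_gt hx0)
  have h1 : HasDerivAt (fun y : ℝ => 48 * y) (48:ℝ) x := by
    simpa using (hasDerivAt_id x).const_mul (48:ℝ)
  have hfrac : HasDerivAt (fun y : ℝ => 24 * y / (y + 1))
      ((24 * (x + 1) - 24 * x * 1) / (x + 1) ^ 2) x := by
    have hnum : HasDerivAt (fun y : ℝ => 24 * y) (24:ℝ) x := by
      simpa using (hasDerivAt_id x).const_mul (24:ℝ)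
    exact hnum.div ((hasDerivAt_id x).add_const 1) (ne_of_gt hx1)
  have hlin : HasDerivAt (fun y : ℝ => 30 * y - 18) (30:ℝ) x := by
    simpa using ((hasDerivAt_id x).const_mul (30:ℝ)).sub_const 18
  have hd := ((h1.mul (hL.sub hlog)).sub hfrac).add hlin
  refine HasDerivAt.cv hd ?_ ?_
  · funext y; simp only [Pi.add_apply, Pi.sub_apply, Pi.mul_apply, id_eq]; ring
  · simp only [Pi.add_apply, Pi.sub_apply, Pi.mul_apply, id_eq]; field_simp; ring

lemma p1_neg {t : ℝ} (ht : 1 < t) :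
    24 * t ^ 2 * (Real.log ((t + 1) / 2) - Real.log t) + 15 * t ^ 2 - 18 * t + 3 < 0 := by
  apply aux_neg
    (f' := fun x => 48 * x * (Real.log ((x + 1) / 2) - Real.log x) - 24 * x / (x + 1)
      + 30 * x - 18)
    (fun x hx => ?_) (fun x hx => p2_neg hx) (by norm_num) ht
  have hx0 : (0:ℝ) < x := by linarith
  have hx1 : (0:ℝ) < x + 1 := by linarith
  have hL := hasDerivAt_L hx0
  have hlog := Real.hasDerivAt_log (ne_of_gt hx0)
  have h1 : HasDerivAt (fun y : ℝ => 24 * y ^ 2) (48 * x) x := by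
    have := ((hasDerivAt_id x).pow 2).const_mul (24:ℝ)
    refine HasDerivAt.cv this (by rfl) ?_; simp only [id_eq]; ring
  have hlin : HasDerivAt (fun y : ℝ => 15 * y ^ 2 - 18 * y + 3) (30 * x - 18) x := by
    have a1 := ((hasDerivAt_id x).pow 2).const_mul (15:ℝ)
    have a2 := (hasDerivAt_id x).const_mul (18:ℝ)
    have := (a1.sub a2).add_const 3
    refine HasDerivAt.cv this (by rfl) ?_; simp only [id_eq]; ring
  have hd := (h1.mul (hL.sub hlog)).add hlin
  refine HasDerivAt.cv hd ?_ ?_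
  · funext y; simp only [Pi.add_apply, Pi.sub_apply, Pi.mul_apply, id_eq]; ring
  · simp only [Pi.add_apply, Pi.sub_apply, Pi.mul_apply, id_eq]; field_simp; ring

lemma p_neg {t : ℝ} (ht : 1 < t) :
    8 * ((t ^ 3 + 1) * Real.log ((t + 1) / 2) - t ^ 3 * Real.log t)
      + 5 * ((t - 1) ^ 2 * (t + 1)) < 0 := by
  apply aux_neg
    (f' := fun x => 24 * x ^ 2 * (Real.log ((x + 1) / 2) - Real.log x) + 15 * x ^ 2
      - 18 * x + 3)
    (fun x hx => ?_) (fun x hx => p1_neg hx) (by norm_num) ht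
  have hx0 : (0:ℝ) < x := by linarith
  have hx1 : (0:ℝ) < x + 1 := by linarith
  have hL := hasDerivAt_L hx0
  have hlog := Real.hasDerivAt_log (ne_of_gt hx0)
  have hcube : HasDerivAt (fun y : ℝ => y ^ 3 + 1) (3 * x ^ 2) x := by
    have := ((hasDerivAt_id x).pow 3).add_const 1
    refine HasDerivAt.cv this (by rfl) ?_; simp only [id_eq]; push_cast; ring
  have hcube2 : HasDerivAt (fun y : ℝ => y ^ 3) (3 * x ^ 2) x := by
    have := (hasDerivAt_id x).pow 3
    refine HasDerivAt.cv this (by rfl) ?_; simp only [id_eq]; push_cast; ring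
  have hpoly : HasDerivAt (fun y : ℝ => (y - 1) ^ 2 * (y + 1)) (3 * x ^ 2 - 2 * x - 1) x := by
    have a1 : HasDerivAt (fun y : ℝ => (y - 1) ^ 2) (2 * (x - 1)) x := by
      exact HasDerivAt.cv ((((hasDerivAt_id x).sub_const 1).pow 2)) (by rfl) (by simp)
    have := a1.mul ((hasDerivAt_id x).add_const 1)
    refine HasDerivAt.cv this (by rfl) ?_; simp only [id_eq]; ring
  have hd := (((hcube.mul hL).sub (hcube2.mul hlog)).const_mul 8).add (hpoly.const_mul 5)
  refine HasDerivAt.cv hd (by rfl) ?_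
  field_simp
  ring

lemma log_gt {u : ℝ} (hu : 1 < u) : 2 * (u - 1) / (u + 1) < Real.log u := by
  have h := aux_pos
    (f := fun y => Real.log y - 2 * (y - 1) / (y + 1))
    (f' := fun y => 1 / y - 4 / (y + 1) ^ 2)
    (fun x hx => ?_) (fun x hx => ?_) (by norm_num) hu
  · linarith [h]
  · have hx0 : (0:ℝ) < x := by linarith
    have hx1 : (0:ℝ) < x + 1 := by linarith
    have hlog := Real.hasDerivAt_log (ne_of_gt hx0)
    have hnum : HasDerivAt (fun y : ℝ => 2 * (y - 1)) (2:ℝ) x := by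
      simpa using (((hasDerivAt_id x).sub_const 1).const_mul (2:ℝ))
    have hfrac := hnum.div ((hasDerivAt_id x).add_const 1) (ne_of_gt hx1)
    have hd := hlog.sub hfrac
    refine HasDerivAt.cv hd (by rfl) ?_
    simp only [id_eq]
    ring
  · have hx0 : (0:ℝ) < x := by linarith
    have key : 1 / x - 4 / (x + 1) ^ 2 = (x - 1) ^ 2 / (x * (x + 1) ^ 2) := by
      field_simp
      ring
    rw [key]
    have : (0:ℝ) < x - 1 := by linarith
    positivity

lemma q2_pos {t : ℝ} (ht : 1 < t) :
    0 < 6 * t * (Real.log ((t + 1) / 2) - Real.log t) - 3 * t / (t + 1) - 1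
      + (6 * t - 2) * Real.log 2 := by
  have hx0 : (0:ℝ) < t := by linarith
  have hx1 : (0:ℝ) < t + 1 := by linarith
  have hu : 1 < (t + 1) / t := by
    rw [lt_div_iff₀ hx0]; linarith
  have hlog := log_gt hu
  have hrw : Real.log ((t + 1) / t) = Real.log ((t + 1) / 2) - Real.log t + Real.log 2 := by
    rw [Real.log_div (by linarith) (ne_of_gt hx0), Real.log_div (by linarith) (by norm_num)]
    ring
  rw [hrw] at hlog
  have hval : 2 * ((t + 1) / t - 1) / ((t + 1) / t + 1) = 2 / (2 * t + 1) := by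
    rw [div_eq_div_iff (by positivity) (by positivity)]
    field_simp
    ring
  rw [hval] at hlog
  have hlog2 : Real.log 2 < 0.6931471808 := Real.log_two_lt_d9
  have hfrac : 12 * t / (2 * t + 1) - 3 * t / (t + 1) ≥ 5 / 2 := by
    rw [ge_iff_le, div_sub_div _ _ (by positivity) (ne_of_gt hx1), le_div_iff₀ (by positivity)]
    nlinarith
  have h6t : 0 < 6 * t := by linarith
  have key : 12 * t / (2 * t + 1) < 6 * t * (Real.log ((t + 1) / 2) - Real.log t + Real.log 2) := by
    have := (mul_lt_mul_iff_right₀ h6t).mpr hlog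
    calc 12 * t / (2 * t + 1) = 6 * t * (2 / (2 * t + 1)) := by ring
    _ < _ := this
  nlinarith [Real.log_two_gt_d9]

lemma q1_pos {t : ℝ} (ht : 1 < t) :
    0 < 3 * t ^ 2 * (Real.log ((t + 1) / 2) - Real.log t) + 1 - t
      + (3 * t ^ 2 - 2 * t - 1) * Real.log 2 := by
  apply aux_pos
    (f' := fun x => 6 * x * (Real.log ((x + 1) / 2) - Real.log x) - 3 * x / (x + 1) - 1
      + (6 * x - 2) * Real.log 2)
    (fun x hx => ?_) (fun x hx => q2_pos hx) (by norm_num) ht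
  have hx0 : (0:ℝ) < x := by linarith
  have hx1 : (0:ℝ) < x + 1 := by linarith
  have hL := hasDerivAt_L hx0
  have hlog := Real.hasDerivAt_log (ne_of_gt hx0)
  have h1 : HasDerivAt (fun y : ℝ => 3 * y ^ 2) (6 * x) x := by
    have := ((hasDerivAt_id x).pow 2).const_mul (3:ℝ)
    refine HasDerivAt.cv this (by rfl) ?_; simp only [id_eq]; ring
  have hlin : HasDerivAt (fun y : ℝ => 1 - y) (-1 : ℝ) x := by
    simpa using (hasDerivAt_id x).const_sub 1
  have hpoly : HasDerivAt (fun y : ℝ => (3 * y ^ 2 - 2 * y - 1) * Real.log 2)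
      ((6 * x - 2) * Real.log 2) x := by
    have a1 := ((hasDerivAt_id x).pow 2).const_mul (3:ℝ)
    have a2 := (hasDerivAt_id x).const_mul (2:ℝ)
    have := ((a1.sub a2).sub_const 1).mul_const (Real.log 2)
    refine HasDerivAt.cv this (by rfl) ?_; simp only [id_eq]; ring
  have hd := (((h1.mul (hL.sub hlog)).add hlin).add hpoly)
  refine HasDerivAt.cv hd ?_ ?_
  · funext y; simp only [Pi.add_apply, Pi.sub_apply, Pi.mul_apply, id_eq]; ring
  · simp only [Pi.add_apply, Pi.sub_apply, Pi.mul_apply, id_eq]; field_simp; ring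

lemma q_pos {t : ℝ} (ht : 1 < t) :
    0 < (t ^ 3 + 1) * Real.log ((t + 1) / 2) - t ^ 3 * Real.log t
      + Real.log 2 * ((t - 1) ^ 2 * (t + 1)) := by
  apply aux_pos
    (f' := fun x => 3 * x ^ 2 * (Real.log ((x + 1) / 2) - Real.log x) + 1 - x
      + (3 * x ^ 2 - 2 * x - 1) * Real.log 2)
    (fun x hx => ?_) (fun x hx => q1_pos hx) (by norm_num) ht
  have hx0 : (0:ℝ) < x := by linarith
  have hx1 : (0:ℝ) < x + 1 := by linarith
  have hL := hasDerivAt_L hx0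
  have hlog := Real.hasDerivAt_log (ne_of_gt hx0)
  have hcube : HasDerivAt (fun y : ℝ => y ^ 3 + 1) (3 * x ^ 2) x := by
    have := ((hasDerivAt_id x).pow 3).add_const 1
    refine HasDerivAt.cv this (by rfl) ?_; simp only [id_eq]; push_cast; ring
  have hcube2 : HasDerivAt (fun y : ℝ => y ^ 3) (3 * x ^ 2) x := by
    have := (hasDerivAt_id x).pow 3
    refine HasDerivAt.cv this (by rfl) ?_; simp only [id_eq]; push_cast; ring
  have hpoly : HasDerivAt (fun y : ℝ => Real.log 2 * ((y - 1) ^ 2 * (y + 1)))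
      (Real.log 2 * (3 * x ^ 2 - 2 * x - 1)) x := by
    have a1 : HasDerivAt (fun y : ℝ => (y - 1) ^ 2) (2 * (x - 1)) x := by
      exact HasDerivAt.cv ((((hasDerivAt_id x).sub_const 1).pow 2)) (by rfl) (by simp)
    have := (a1.mul ((hasDerivAt_id x).add_const 1)).const_mul (Real.log 2)
    refine HasDerivAt.cv this (by rfl) ?_; simp only [id_eq]; ring
  have hd := ((hcube.mul hL).sub (hcube2.mul hlog)).add hpoly
  refine HasDerivAt.cv hd (by rfl) ?_
  field_simp
  ring

lemma f2_hasDeriv {t : ℝ} (ht : 1 < t) :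
    HasDerivAt (fun t : ℝ =>
      (8/3) * (1 + ((t^3 + 1) * Real.log ((t + 1) / 2) - t^3 * Real.log t) /
        ((t - 1)^2 * (t + 1))))
      (8/3 * (((3 * t ^ 2 * (Real.log ((t + 1) / 2) - Real.log t) + 1 - t)
          * ((t - 1) ^ 2 * (t + 1))
        - ((t ^ 3 + 1) * Real.log ((t + 1) / 2) - t ^ 3 * Real.log t)
          * (3 * t ^ 2 - 2 * t - 1)) / ((t - 1) ^ 2 * (t + 1)) ^ 2)) t := by
  have hx0 : (0:ℝ) < t := by linarith
  have hx1 : (0:ℝ) < t + 1 := by linarith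
  have hD : (0:ℝ) < (t - 1) ^ 2 * (t + 1) := by nlinarith
  have hL := hasDerivAt_L hx0
  have hlog := Real.hasDerivAt_log (ne_of_gt hx0)
  have hcube : HasDerivAt (fun y : ℝ => y ^ 3 + 1) (3 * t ^ 2) t := by
    have := ((hasDerivAt_id t).pow 3).add_const 1
    refine HasDerivAt.cv this (by rfl) ?_; simp only [id_eq]; push_cast; ring
  have hcube2 : HasDerivAt (fun y : ℝ => y ^ 3) (3 * t ^ 2) t := by
    have := (hasDerivAt_id t).pow 3
    refine HasDerivAt.cv this (by rfl) ?_; simp only [id_eq]; push_cast; ring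
  have hN : HasDerivAt (fun y : ℝ => (y ^ 3 + 1) * Real.log ((y + 1) / 2) - y ^ 3 * Real.log y)
      (3 * t ^ 2 * (Real.log ((t + 1) / 2) - Real.log t) + 1 - t) t := by
    have hd := (hcube.mul hL).sub (hcube2.mul hlog)
    refine HasDerivAt.cv hd (by rfl) ?_
    field_simp
    ring
  have hDd : HasDerivAt (fun y : ℝ => (y - 1) ^ 2 * (y + 1)) (3 * t ^ 2 - 2 * t - 1) t := by
    have a1 : HasDerivAt (fun y : ℝ => (y - 1) ^ 2) (2 * (t - 1)) t := by
      exact HasDerivAt.cv ((((hasDerivAt_id t).sub_const 1).pow 2)) (by rfl) (by simp)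
    have := a1.mul ((hasDerivAt_id t).add_const 1)
    refine HasDerivAt.cv this (by rfl) ?_; simp only [id_eq]; ring
  have hdiv := hN.div hDd (ne_of_gt hD)
  have := (hdiv.const_add 1).const_mul (8/3 : ℝ)
  exact HasDerivAt.cv this (by rfl) (by rfl)

theorem f2_strict_anti_and_bounds :
    StrictAntiOn (fun t : ℝ =>
      (8/3) * (1 + ((t^3 + 1) * Real.log ((t + 1) / 2) - t^3 * Real.log t) /
        ((t - 1)^2 * (t + 1)))) (Set.Ioi 1) ∧
    ∀ t : ℝ, 1 < t →
      8 * (1 - Real.log 2) / 3 <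
        (8/3) * (1 + ((t^3 + 1) * Real.log ((t + 1) / 2) - t^3 * Real.log t) /
          ((t - 1)^2 * (t + 1))) ∧
      (8/3) * (1 + ((t^3 + 1) * Real.log ((t + 1) / 2) - t^3 * Real.log t) /
        ((t - 1)^2 * (t + 1))) < 1 := by
  constructor
  · apply strictAntiOn_of_deriv_neg (convex_Ioi 1)
    · exact fun x hx => (f2_hasDeriv hx).continuousAt.continuousWithinAt
    · intro x hx
      rw [interior_Ioi, Set.mem_Ioi] at hx
      rw [(f2_hasDeriv hx).deriv]
      have hh := h_neg hx
      have hx1 : (0:ℝ) < x + 1 := by linarith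
      have hD : (0:ℝ) < (x - 1) ^ 2 * (x + 1) := by nlinarith
      have hident : (3 * x ^ 2 * (Real.log ((x + 1) / 2) - Real.log x) + 1 - x)
            * ((x - 1) ^ 2 * (x + 1))
          - ((x ^ 3 + 1) * Real.log ((x + 1) / 2) - x ^ 3 * Real.log x)
            * (3 * x ^ 2 - 2 * x - 1)
          = (x - 1) * (-(x + 1) ^ 3 * Real.log ((x + 1) / 2)
            + x ^ 2 * (x + 3) * Real.log x - (x - 1) ^ 2 * (x + 1)) := by ring
      rw [hident]
      have hneg1 : (x - 1) * (-(x + 1) ^ 3 * Real.log ((x + 1) / 2)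
          + x ^ 2 * (x + 3) * Real.log x - (x - 1) ^ 2 * (x + 1)) < 0 :=
        mul_neg_of_pos_of_neg (by linarith) hh
      have hneg2 := div_neg_of_neg_of_pos hneg1 (by positivity : (0:ℝ) < ((x - 1) ^ 2 * (x + 1)) ^ 2)
      exact mul_neg_of_pos_of_neg (by norm_num) hneg2
  · intro t ht
    have hx1 : (0:ℝ) < t + 1 := by linarith
    have hD : (0:ℝ) < (t - 1) ^ 2 * (t + 1) := by nlinarith
    constructor
    · have hq := q_pos ht
      have hND : -Real.log 2 < ((t ^ 3 + 1) * Real.log ((t + 1) / 2) - t ^ 3 * Real.log t) /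
          ((t - 1) ^ 2 * (t + 1)) := by
        rw [lt_div_iff₀ hD]
        nlinarith
      nlinarith
    · have hp := p_neg ht
      have hND : ((t ^ 3 + 1) * Real.log ((t + 1) / 2) - t ^ 3 * Real.log t) /
          ((t - 1) ^ 2 * (t + 1)) < -(5/8) := by
        rw [div_lt_iff₀ hD]
        nlinarith
      nlinarith
end

section
/- For 0 < a < b, the integral harmonic mean satisfies (8(1−ln 2)/3)·A(a,b) < I_H(a,b) < A(a,b), where I_H(a,b) = (2/(b−a)²)·∫ₐᵇ∫ₐᵇ xy/(x+y) dx dy and A(a,b) = (a+b)/2. -/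
open intervalIntegral Real Set

private lemma pointwise_upper' {x y : ℝ} (hx : 0 < x) (hy : 0 < y) (hxy : x ≠ y) :
    x*y/(x+y) < (x+y)/4 := by
  rw [div_lt_div_iff₀ (by positivity) (by norm_num)]
  nlinarith [mul_self_pos.mpr (sub_ne_zero.2 hxy)]

private lemma pointwise_lower' {a x y : ℝ} (ha : 0 < a) (hx : a ≤ x) (hy : a ≤ y) :
    a/2 + (x-a)*(y-a)/(x+y-2*a) ≤ x*y/(x+y) := by
  rcases hx.eq_or_lt with heq | hlt
  · subst heq
    simp only [sub_self, zero_mul, zero_div, add_zero]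
    rw [div_le_div_iff₀ (by norm_num) (by linarith : (0:ℝ) < a + y)]
    nlinarith
  · have hd : 0 < x + y - 2*a := by linarith
    rw [div_add_div _ _ (by norm_num) (ne_of_gt hd), div_le_div_iff₀ (by linarith) (by linarith)]
    nlinarith [mul_nonneg ha.le (sq_nonneg (x-y))]

private lemma inner_integrable' {a b x : ℝ} (ha : 0 < a) (hab : a ≤ b) (hx : 0 < x) :
    IntervalIntegrable (fun y => x*y/(x+y)) MeasureTheory.volume a b := by
  apply ContinuousOn.intervalIntegrable
  apply ContinuousOn.div (by fun_prop) (by fun_prop)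
  intro y hy
  rw [uIcc_of_le hab] at hy
  have := hy.1
  exact ne_of_gt (by linarith)

private lemma inner_upper_eq' {a b x : ℝ} (ha : 0 < a) (hab : a ≤ b) (hx : 0 < x) :
    ∫ y in a..b, x*y/(x+y) = x*(b-a) - x^2*(Real.log (x+b) - Real.log (x+a)) := by
  have key : ∀ y ∈ uIcc a b, HasDerivAt (fun y => x*y - x^2 * Real.log (x+y)) (x*y/(x+y)) y := by
    intro y hy
    rw [uIcc_of_le hab] at hy
    have hxy : 0 < x + y := by have := hy.1; linarith
    have h1 : HasDerivAt (fun y : ℝ => x*y) x y := by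
      simpa using (hasDerivAt_id y).const_mul x
    have h2 : HasDerivAt (fun y : ℝ => Real.log (x+y)) (1/(x+y)) y := by
      have := (((hasDerivAt_id y).const_add x).log (ne_of_gt hxy))
      simpa using this
    have h3 := h1.sub (h2.const_mul (x^2))
    refine h3.congr_deriv ?_
    field_simp
    ring
  rw [integral_eq_sub_of_hasDerivAt key (inner_integrable' ha hab hx)]
  ring

private lemma inner_mid_eq' {a b x : ℝ} :
    ∫ y in a..b, (x+y)/4 = (b-a)*x/4 + (b^2-a^2)/8 := by
  have key : ∀ y ∈ uIcc a b, HasDerivAt (fun y => (x*y + y^2/2)/4) ((x+y)/4) y := by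
    intro y _
    have h1 : HasDerivAt (fun y : ℝ => x*y) x y := by
      simpa using (hasDerivAt_id y).const_mul x
    have h2 : HasDerivAt (fun y : ℝ => y^2/2) y y := by
      simpa using (hasDerivAt_pow 2 y).div_const 2
    have := (h1.add h2).div_const 4
    exact this
  rw [integral_eq_sub_of_hasDerivAt key (by apply ContinuousOn.intervalIntegrable; fun_prop)]
  ring

private lemma lower_integrand_integrable' {a b x : ℝ} (ha : 0 < a) (hab : a ≤ b) (hx : a ≤ x) :
    IntervalIntegrable (fun y => a/2 + (x-a)*(y-a)/(x+y-2*a)) MeasureTheory.volume a b := by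
  rcases hx.eq_or_lt with heq | hlt
  · subst heq
    simp only [sub_self, zero_mul, zero_div, add_zero]
    exact intervalIntegrable_const
  · apply ContinuousOn.intervalIntegrable
    apply ContinuousOn.add (by fun_prop)
    apply ContinuousOn.div (by fun_prop) (by fun_prop)
    intro y hy
    rw [uIcc_of_le hab] at hy
    have := hy.1
    exact ne_of_gt (by linarith)

private lemma inner_lower_eq' {a b x : ℝ} (ha : 0 < a) (hab : a ≤ b) (hx : a ≤ x) :
    ∫ y in a..b, (a/2 + (x-a)*(y-a)/(x+y-2*a))
      = a/2*(b-a) + (x-a)*(b-a) - (x-a)^2 * (Real.log (x+b-2*a) - Real.log (x-a)) := by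
  rcases hx.eq_or_lt with heq | hlt
  · subst heq
    simp only [sub_self, zero_mul, zero_div, add_zero, zero_pow, ne_eq, OfNat.ofNat_ne_zero,
      not_false_iff, integral_const, smul_eq_mul]
    ring
  · have key : ∀ y ∈ uIcc a b, HasDerivAt
        (fun y => a/2*y + (x-a)*(y-a) - (x-a)^2 * Real.log (x+y-2*a))
        (a/2 + (x-a)*(y-a)/(x+y-2*a)) y := by
      intro y hy
      rw [uIcc_of_le hab] at hy
      have hd : 0 < x + y - 2*a := by have := hy.1; linarith
      have h1 : HasDerivAt (fun y : ℝ => a/2*y) (a/2) y := by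
        simpa using (hasDerivAt_id y).const_mul (a/2)
      have h2 : HasDerivAt (fun y : ℝ => (x-a)*(y-a)) (x-a) y := by
        simpa using ((hasDerivAt_id y).sub_const a).const_mul (x-a)
      have h3 : HasDerivAt (fun y : ℝ => Real.log (x+y-2*a)) (1/(x+y-2*a)) y := by
        have := (((hasDerivAt_id y).const_add x).sub_const (2*a)).log (ne_of_gt hd)
        simpa using this
      have := (h1.add h2).sub (h3.const_mul ((x-a)^2))
      refine this.congr_deriv ?_
      linear_combination (a - x) * mul_inv_cancel₀ hd.ne'
    rw [integral_eq_sub_of_hasDerivAt key (lower_integrand_integrable' ha hab hx)]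
    ring

private lemma cont_sq_log' (a c : ℝ) (n : ℕ) :
    Continuous fun x : ℝ => (x-a)^(n+1) * Real.log (x-a) / c := by
  have h : Continuous fun x : ℝ => ((x-a)^n / c) * ((x-a) * Real.log (x-a)) :=
    (((continuous_pow n).comp (continuous_id.sub continuous_const)).div_const c).mul
      (Real.continuous_mul_log.comp (continuous_id.sub continuous_const))
  convert h using 1
  funext x
  ring

private lemma outer_lower_eq' {a b : ℝ} (ha : 0 < a) (hab : a < b) :
    ∫ x in a..b, (a/2*(b-a) + (x-a)*(b-a) - (x-a)^2 * (Real.log (x+b-2*a) - Real.log (x-a)))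
      = a/2*(b-a)^2 + 2/3*(1-Real.log 2)*(b-a)^3 := by
  set F : ℝ → ℝ := fun x => a/2*(b-a)*x + (b-a)*(x-a)^2/2
    - (((x-a)^3+(b-a)^3)/3 * Real.log (x+b-2*a) - (x-a)^3/9 + (b-a)*(x-a)^2/6 - (b-a)^2*(x-a)/3)
    + ((x-a)^3/3 * Real.log (x-a) - (x-a)^3/9) with hF
  have hlogcont : ContinuousOn (fun x : ℝ => Real.log (x+b-2*a)) (Icc a b) := by
    apply ContinuousOn.log (by fun_prop)
    intro x hx
    have := hx.1
    intro h; nlinarith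
  have hcontF : ContinuousOn F (Icc a b) := by
    have heqF : F = fun x : ℝ => ((a/2*(b-a)*x + (b-a)*(x-a)^2/2 + (x-a)^3/9 - (b-a)*(x-a)^2/6
        + (b-a)^2*(x-a)/3 - (x-a)^3/9)
        - (((x-a)^3+(b-a)^3)/3) * Real.log (x+b-2*a)) + (x-a)^(2+1) * Real.log (x-a) / 3 := by
      funext x
      simp only [hF]
      ring
    rw [heqF]
    exact (ContinuousOn.sub (by fun_prop) (ContinuousOn.mul (by fun_prop) hlogcont)).add
      (cont_sq_log' a 3 2).continuousOn
  have hderiv : ∀ x ∈ Ioo a b, HasDerivAt F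
      (a/2*(b-a) + (x-a)*(b-a) - (x-a)^2 * (Real.log (x+b-2*a) - Real.log (x-a))) x := by
    intro x hx
    have hx0 : 0 < x - a := by linarith [hx.1]
    have hd : 0 < x + b - 2*a := by linarith [hx.1]
    have p1 : HasDerivAt (fun x : ℝ => a/2*(b-a)*x) (a/2*(b-a)) x := by
      simpa using (hasDerivAt_id x).const_mul (a/2*(b-a))
    have p2 : HasDerivAt (fun x : ℝ => (b-a)*(x-a)^2/2) ((b-a)*(x-a)) x := by
      have := ((((hasDerivAt_id x).sub_const a).pow 2).const_mul (b-a)).div_const 2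
      refine this.congr_deriv ?_
      try simp only [id_eq]
      ring
    have hu : HasDerivAt (fun x : ℝ => ((x-a)^3+(b-a)^3)/3) ((x-a)^2) x := by
      have := ((((hasDerivAt_id x).sub_const a).pow 3).add_const ((b-a)^3)).div_const 3
      refine this.congr_deriv ?_
      try simp only [id_eq]
      ring
    have hL1 : HasDerivAt (fun x : ℝ => Real.log (x+b-2*a)) (1/(x+b-2*a)) x := by
      have := (((hasDerivAt_id x).add_const b).sub_const (2*a)).log (ne_of_gt hd)
      simpa using this
    have p3 := hu.mul hL1
    have p4 : HasDerivAt (fun x : ℝ => (x-a)^3/9) ((x-a)^2/3) x := by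
      have := (((hasDerivAt_id x).sub_const a).pow 3).div_const 9
      refine this.congr_deriv ?_
      try simp only [id_eq]
      ring
    have p5 : HasDerivAt (fun x : ℝ => (b-a)*(x-a)^2/6) ((b-a)*(x-a)/3) x := by
      have := ((((hasDerivAt_id x).sub_const a).pow 2).const_mul (b-a)).div_const 6
      refine this.congr_deriv ?_
      try simp only [id_eq]
      ring
    have p6 : HasDerivAt (fun x : ℝ => (b-a)^2*(x-a)/3) ((b-a)^2/3) x := by
      have := (((hasDerivAt_id x).sub_const a).const_mul ((b-a)^2)).div_const 3
      refine this.congr_deriv ?_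
      try simp only [id_eq]
      ring
    have hv : HasDerivAt (fun x : ℝ => (x-a)^3/3) ((x-a)^2) x := by
      have := (((hasDerivAt_id x).sub_const a).pow 3).div_const 3
      refine this.congr_deriv ?_
      try simp only [id_eq]
      ring
    have hL2 : HasDerivAt (fun x : ℝ => Real.log (x-a)) (1/(x-a)) x := by
      have := ((hasDerivAt_id x).sub_const a).log (ne_of_gt hx0)
      simpa using this
    have p7 := hv.mul hL2
    have total := ((p1.add p2).sub (((p3.sub p4).add p5).sub p6)).add (p7.sub p4)
    refine total.congr_deriv ?_
    linear_combination (-((x-a)^2 - (x-a)*(b-a) + (b-a)^2)/3) * mul_inv_cancel₀ hd.ne' + ((x-a)^2/3) * mul_inv_cancel₀ hx0.ne'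
  have hint : IntervalIntegrable
      (fun x => a/2*(b-a) + (x-a)*(b-a) - (x-a)^2 * (Real.log (x+b-2*a) - Real.log (x-a)))
      MeasureTheory.volume a b := by
    have heq : (fun x : ℝ => a/2*(b-a) + (x-a)*(b-a) - (x-a)^2 * (Real.log (x+b-2*a) - Real.log (x-a)))
        = (fun x : ℝ => (a/2*(b-a) + (x-a)*(b-a) - (x-a)^2 * Real.log (x+b-2*a))
            + (x-a)^(1+1) * Real.log (x-a) / 1) := by
      funext x
      ring
    rw [heq]
    apply ContinuousOn.intervalIntegrable
    rw [uIcc_of_le hab.le]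
    exact (ContinuousOn.sub (by fun_prop) (ContinuousOn.mul (by fun_prop) hlogcont)).add
      (cont_sq_log' a 1 1).continuousOn
  rw [integral_eq_sub_of_hasDerivAt_of_le hab.le hcontF hderiv hint]
  simp only [hF]
  have hs : b - a ≠ 0 := ne_of_gt (sub_pos.2 hab)
  rw [show b+b-2*a = 2*(b-a) by ring, Real.log_mul two_ne_zero hs,
    show a+b-2*a = b-a by ring]
  simp only [sub_self, Real.log_zero]
  ring

private lemma outer_mid_eq' {a b : ℝ} :
    ∫ x in a..b, ((b-a)*x/4 + (b^2-a^2)/8) = (b-a)^2*(a+b)/4 := by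
  have key : ∀ x ∈ uIcc a b,
      HasDerivAt (fun x => (b-a)*x^2/8 + (b^2-a^2)/8*x) ((b-a)*x/4 + (b^2-a^2)/8) x := by
    intro x _
    have h1 : HasDerivAt (fun x : ℝ => (b-a)*x^2/8) ((b-a)*x/4) x := by
      have := (((hasDerivAt_id x).pow 2).const_mul (b-a)).div_const 8
      refine this.congr_deriv ?_
      try simp only [id_eq]
      ring
    have h2 : HasDerivAt (fun x : ℝ => (b^2-a^2)/8*x) ((b^2-a^2)/8) x := by
      simpa using (hasDerivAt_id x).const_mul ((b^2-a^2)/8)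
    exact h1.add h2
  rw [integral_eq_sub_of_hasDerivAt key (by apply ContinuousOn.intervalIntegrable; fun_prop)]
  ring

theorem IH_bounds (a b : ℝ) (ha : 0 < a) (hab : a < b) :
    (8 * (1 - Real.log 2) / 3) * ((a + b) / 2) <
      (2 / (b - a)^2) * (∫ x in a..b, ∫ y in a..b, x * y / (x + y)) ∧
    (2 / (b - a)^2) * (∫ x in a..b, ∫ y in a..b, x * y / (x + y)) < (a + b) / 2 := by
  have hs : 0 < b - a := sub_pos.2 hab
  have hs2 : 0 < (b - a)^2 := by positivity
  -- rewrite the outer integrand by the inner closed form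
  have hSrw : (∫ x in a..b, ∫ y in a..b, x * y / (x + y))
      = ∫ x in a..b, (x*(b-a) - x^2*(Real.log (x+b) - Real.log (x+a))) := by
    apply integral_congr
    intro x hx
    rw [uIcc_of_le hab.le] at hx
    exact inner_upper_eq' ha hab.le (lt_of_lt_of_le ha hx.1)
  set Φ : ℝ → ℝ := fun x => x*(b-a) - x^2*(Real.log (x+b) - Real.log (x+a)) with hΦ
  have hΦcont : ContinuousOn Φ (Icc a b) := by
    apply ContinuousOn.sub (by fun_prop)
    apply ContinuousOn.mul (by fun_prop)
    apply ContinuousOn.sub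
    · exact ContinuousOn.log (by fun_prop) fun x hx =>
        ne_of_gt (by have := hx.1; nlinarith)
    · exact ContinuousOn.log (by fun_prop) fun x hx =>
        ne_of_gt (by have := hx.1; nlinarith)
  -- upper bound
  have hup_inner : ∀ x ∈ Icc a b, Φ x < (b-a)*x/4 + (b^2-a^2)/8 := by
    intro x hx
    have hx0 : 0 < x := lt_of_lt_of_le ha hx.1
    simp only [hΦ]
    rw [← inner_upper_eq' ha hab.le hx0, ← inner_mid_eq' (a := a) (b := b) (x := x)]
    apply integral_lt_integral_of_continuousOn_of_le_of_exists_lt hab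
    · apply ContinuousOn.div (by fun_prop) (by fun_prop)
      intro y hy
      exact ne_of_gt (by have := hy.1; linarith)
    · fun_prop
    · intro y hy
      have hy0 : 0 < y := lt_of_lt_of_le ha hy.1.le
      rcases eq_or_ne x y with rfl | hne
      · rw [div_le_div_iff₀ (by linarith : (0:ℝ) < x + x) (by norm_num : (0:ℝ) < 4)]
        nlinarith [sq_nonneg x]
      · exact (pointwise_upper' hx0 hy0 hne).le
    · rcases eq_or_ne x a with rfl | hne
      · exact ⟨b, ⟨hab.le, le_refl b⟩, pointwise_upper' hx0 (lt_trans ha hab) (ne_of_lt hab)⟩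
      · exact ⟨a, ⟨le_refl a, hab.le⟩, pointwise_upper' hx0 ha (Ne.symm (fun h => hne h.symm))⟩
  have hup : (∫ x in a..b, Φ x) < (b-a)^2*(a+b)/4 := by
    rw [← outer_mid_eq' (a := a) (b := b)]
    apply integral_lt_integral_of_continuousOn_of_le_of_exists_lt hab hΦcont (by fun_prop)
    · exact fun x hx => (hup_inner x ⟨hx.1.le, hx.2⟩).le
    · exact ⟨a, ⟨le_refl a, hab.le⟩, hup_inner a ⟨le_refl a, hab.le⟩⟩
  -- lower bound
  have hlow_inner : ∀ x ∈ Icc a b,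
      a/2*(b-a) + (x-a)*(b-a) - (x-a)^2 * (Real.log (x+b-2*a) - Real.log (x-a)) ≤ Φ x := by
    intro x hx
    simp only [hΦ]
    rw [← inner_upper_eq' ha hab.le (lt_of_lt_of_le ha hx.1), ← inner_lower_eq' ha hab.le hx.1]
    apply integral_mono_on hab.le (lower_integrand_integrable' ha hab.le hx.1)
      (inner_integrable' ha hab.le (lt_of_lt_of_le ha hx.1))
    exact fun y hy => pointwise_lower' ha hx.1 hy.1
  have hlowcont : ContinuousOn
      (fun x : ℝ => a/2*(b-a) + (x-a)*(b-a) - (x-a)^2 * (Real.log (x+b-2*a) - Real.log (x-a)))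
      (Icc a b) := by
    have heq : (fun x : ℝ => a/2*(b-a) + (x-a)*(b-a) - (x-a)^2 * (Real.log (x+b-2*a) - Real.log (x-a)))
        = (fun x : ℝ => (a/2*(b-a) + (x-a)*(b-a) - (x-a)^2 * Real.log (x+b-2*a))
            + (x-a)^(1+1) * Real.log (x-a) / 1) := by
      funext x
      ring
    rw [heq]
    apply ContinuousOn.add
    · apply ContinuousOn.sub (by fun_prop)
      apply ContinuousOn.mul (by fun_prop)
      apply ContinuousOn.log (by fun_prop)
      intro x hx
      exact ne_of_gt (by have := hx.1; nlinarith)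
    · exact (cont_sq_log' a 1 1).continuousOn
  have hlow : a/2*(b-a)^2 + 2/3*(1-Real.log 2)*(b-a)^3 ≤ ∫ x in a..b, Φ x := by
    rw [← outer_lower_eq' ha hab]
    apply integral_mono_on hab.le
      (hlowcont.intervalIntegrable_of_Icc hab.le)
      (hΦcont.intervalIntegrable_of_Icc hab.le)
    exact hlow_inner
  rw [hSrw]
  have hlog : (0.6931471803 : ℝ) < Real.log 2 := Real.log_two_gt_d9
  have e : 2/(b-a)^2 * (∫ x in a..b, Φ x) = 2*(∫ x in a..b, Φ x)/(b-a)^2 := by ring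
  constructor
  · rw [e, lt_div_iff₀ hs2]
    nlinarith [mul_pos ha hs2]
  · rw [e, div_lt_iff₀ hs2]
    nlinarith
end

section
/- For 0 < a < b, A(a,b) < I_r(a,b) < ((2 + √2·ln(1+√2))/3)·A(a,b), where I_r(a,b) = (1/(b−a)²)·∫ₐᵇ∫ₐᵇ √((x²+y²)/2) dx dy and A(a,b) = (a+b)/2. -/
open intervalIntegral Real Set Filter

-- QM-AM
lemma qm_am {x y : ℝ} (hx : 0 ≤ x) (hy : 0 ≤ y) : (x+y)/2 ≤ Real.sqrt ((x^2+y^2)/2) := by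
  rw [show ((x^2+y^2)/2) = ((x+y)/2)^2 + ((x-y)/2)^2 by ring]
  calc (x+y)/2 = Real.sqrt (((x+y)/2)^2) := by rw [Real.sqrt_sq (by positivity)]
  _ ≤ _ := Real.sqrt_le_sqrt (by nlinarith [sq_nonneg ((x-y)/2)])

lemma qm_am_strict {x y : ℝ} (hx : 0 ≤ x) (hy : 0 ≤ y) (hne : x ≠ y) :
    (x+y)/2 < Real.sqrt ((x^2+y^2)/2) := by
  have h : ((x+y)/2)^2 < (x^2+y^2)/2 := by nlinarith [sq_nonneg (x-y), sub_ne_zero.mpr hne, pow_pos (abs_pos.mpr (sub_ne_zero.mpr hne)) 2, sq_abs (x-y)]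
  calc (x+y)/2 = Real.sqrt (((x+y)/2)^2) := by rw [Real.sqrt_sq (by positivity)]
  _ < _ := by
    apply Real.sqrt_lt_sqrt (by positivity) h

-- triangle
lemma tri {a u v : ℝ} (ha : 0 ≤ a) (hu : 0 ≤ u) (hv : 0 ≤ v) :
    Real.sqrt (((a+u)^2+(a+v)^2)/2) ≤ a + Real.sqrt ((u^2+v^2)/2) := by
  have h1 := qm_am hu hv
  have h2 : Real.sqrt ((u^2+v^2)/2) ^ 2 = (u^2+v^2)/2 := Real.sq_sqrt (by positivity)
  have h3 : 0 ≤ Real.sqrt ((u^2+v^2)/2) := Real.sqrt_nonneg _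
  rw [show a + Real.sqrt ((u^2+v^2)/2) = Real.sqrt ((a + Real.sqrt ((u^2+v^2)/2))^2) from (Real.sqrt_sq (by positivity)).symm]
  apply Real.sqrt_le_sqrt
  nlinarith

-- homogeneity
lemma homog {s u v : ℝ} (hs : 0 ≤ s) :
    Real.sqrt (((s*u)^2+(s*v)^2)/2) = s * Real.sqrt ((u^2+v^2)/2) := by
  rw [show ((s*u)^2+(s*v)^2)/2 = s^2 * ((u^2+v^2)/2) by ring, Real.sqrt_mul (sq_nonneg s), Real.sqrt_sq hs]

lemma sqrt_sq_add_pos {x y : ℝ} (hy : 0 < y) : 0 < Real.sqrt (x^2 + y^2) :=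
  Real.sqrt_pos.mpr (by positivity)

lemma hasDerivAt_sqrt_sq_add {y : ℝ} (hy : 0 < y) (x : ℝ) :
    HasDerivAt (fun x => Real.sqrt (x^2 + y^2)) (x / Real.sqrt (x^2 + y^2)) x := by
  have h : HasDerivAt (fun x : ℝ => x^2 + y^2) (2*x) x := by
    simpa using ((hasDerivAt_pow 2 x).add_const (y^2))
  have := h.sqrt (by positivity)
  convert this using 1
  field_simp

lemma inner_int {y : ℝ} (hy : 0 < y) :
    ∫ x in (0:ℝ)..1, Real.sqrt (x^2 + y^2)
      = Real.sqrt (1+y^2)/2 + y^2/2 * Real.log (1 + Real.sqrt (1+y^2)) - y^2/2 * Real.log y := by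
  have key : ∀ x ∈ Set.uIcc (0:ℝ) 1, HasDerivAt
      (fun x => x * Real.sqrt (x^2+y^2)/2 + y^2/2 * Real.log (x + Real.sqrt (x^2+y^2)))
      (Real.sqrt (x^2+y^2)) x := by
    intro x hx
    rw [Set.uIcc_of_le (by norm_num)] at hx
    have hx0 : 0 ≤ x := hx.1
    set S := Real.sqrt (x^2+y^2) with hS
    have hSpos : 0 < S := sqrt_sq_add_pos hy
    have hSsq : S^2 = x^2 + y^2 := Real.sq_sqrt (by positivity)
    have hxS : 0 < x + S := by linarith
    have d1 : HasDerivAt (fun x => Real.sqrt (x^2+y^2)) (x / S) x := hasDerivAt_sqrt_sq_add hy x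
    have d2 : HasDerivAt (fun x => x * Real.sqrt (x^2+y^2)/2)
        ((1 * S + x * (x / S))/2) x := ((hasDerivAt_id x).mul d1).div_const 2
    have d3 : HasDerivAt (fun x => x + Real.sqrt (x^2+y^2)) (1 + x / S) x :=
      (hasDerivAt_id x).add d1
    have d4 : HasDerivAt (fun x => y^2/2 * Real.log (x + Real.sqrt (x^2+y^2)))
        (y^2/2 * ((1 + x / S) / (x + S))) x := (d3.log hxS.ne').const_mul _
    have := d2.add d4
    refine this.congr_deriv ?_
    have : (1 + x / S) / (x + S) = 1 / S := by
      rw [div_eq_div_iff hxS.ne' hSpos.ne']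
      field_simp
      ring
    rw [this]
    field_simp
    nlinarith [hSsq]
  rw [integral_eq_sub_of_hasDerivAt key (by apply Continuous.intervalIntegrable; fun_prop (disch := positivity))]
  have h0 : Real.sqrt (0^2 + y^2) = y := by
    rw [show (0:ℝ)^2 + y^2 = y^2 by ring, Real.sqrt_sq hy.le]
  rw [h0]
  ring_nf

lemma cont_sq_log : Continuous (fun y : ℝ => y^2 * Real.log y) := by
  rw [continuous_iff_continuousAt]
  intro y
  rcases eq_or_ne y 0 with rfl | hy
  · have key : Tendsto (fun x : ℝ => Real.log x * x ^ 2) (nhdsWithin 0 (Ioi 0)) (nhds 0) := by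
      have := tendsto_log_mul_rpow_nhdsGT_zero (r := 2) (by norm_num)
      refine this.congr' ?_
      filter_upwards [self_mem_nhdsWithin] with x _
      rw [show ((2:ℝ)) = ((2:ℕ):ℝ) by norm_num, Real.rpow_natCast]
    have habs : Tendsto (fun y : ℝ => |y|) (nhdsWithin 0 {(0:ℝ)}ᶜ) (nhdsWithin 0 (Ioi 0)) := by
      rw [tendsto_nhdsWithin_iff]
      constructor
      · exact (continuous_abs.tendsto' 0 0 abs_zero).mono_left nhdsWithin_le_nhds
      · filter_upwards [self_mem_nhdsWithin] with x hx
        exact abs_pos.mpr hx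
    have heq : ∀ y : ℝ, y^2 * Real.log y = Real.log |y| * |y| ^ 2 := by
      intro y; rw [Real.log_abs, sq_abs]; ring
    unfold ContinuousAt
    rw [show (fun y : ℝ => y^2 * Real.log y) 0 = 0 by simp]
    have h1 : Tendsto (fun y : ℝ => y^2 * Real.log y) (nhdsWithin 0 {(0:ℝ)}ᶜ) (nhds 0) := by
      simp only [heq]
      exact key.comp habs
    have h2 : Tendsto (fun y : ℝ => y^2 * Real.log y) (pure (0:ℝ)) (nhds 0) := by
      rw [tendsto_pure_left]
      intro s hs
      simpa using mem_of_mem_nhds hs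
    have := h1.sup h2
    rw [nhdsNE_sup_pure] at this
    exact this
  · exact ((continuous_pow 2).continuousAt).mul (Real.continuousAt_log hy)

lemma cont_cube_log : Continuous (fun y : ℝ => y^3 * Real.log y) := by
  have : (fun y : ℝ => y^3 * Real.log y) = fun y : ℝ => y * (y^2 * Real.log y) := by
    funext y; ring
  rw [this]
  exact continuous_id.mul cont_sq_log

-- I3 : ∫ y in 0..1, y^2 * log y = -1/9
lemma I3 : ∫ y in (0:ℝ)..1, y^2 * Real.log y = -(1/9) := by
  have hcont : ContinuousOn (fun y : ℝ => y^3/3 * Real.log y - y^3/9) (Icc 0 1) := by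
    apply Continuous.continuousOn
    have : (fun y : ℝ => y^3/3 * Real.log y - y^3/9) = fun y : ℝ => (y^3 * Real.log y)/3 - y^3/9 := by
      funext y; ring
    rw [this]
    exact (cont_cube_log.div_const 3).sub ((continuous_pow 3).div_const 9)
  have hderiv : ∀ y ∈ Ioo (0:ℝ) 1, HasDerivWithinAt (fun y : ℝ => y^3/3 * Real.log y - y^3/9)
      (y^2 * Real.log y) (Ioi y) y := by
    intro y hy
    have h1 : HasDerivAt (fun y : ℝ => y^3/3 * Real.log y - y^3/9)
        ((3*y^2/3) * Real.log y + y^3/3 * y⁻¹ - 3*y^2/9) y := by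
      have d1 : HasDerivAt (fun y : ℝ => y^3/3) (3*y^2/3) y := by
        simpa using (hasDerivAt_pow 3 y).div_const 3
      have d2 : HasDerivAt Real.log y⁻¹ y := Real.hasDerivAt_log hy.1.ne'
      have d3 : HasDerivAt (fun y : ℝ => y^3/9) (3*y^2/9) y := by
        simpa using (hasDerivAt_pow 3 y).div_const 9
      exact (d1.mul d2).sub d3
    have hy0 : y ≠ 0 := hy.1.ne'
    have : (3*y^2/3) * Real.log y + y^3/3 * y⁻¹ - 3*y^2/9 = y^2 * Real.log y := by
      field_simp
      ring
    rw [this] at h1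
    exact h1.hasDerivWithinAt
  have := integral_eq_sub_of_hasDeriv_right_of_le (by norm_num) hcont hderiv
    (cont_sq_log.intervalIntegrable 0 1)
  rw [this]
  norm_num

lemma S_pos (y : ℝ) : 0 < Real.sqrt (1+y^2) := Real.sqrt_pos.mpr (by positivity)

lemma S_sq (y : ℝ) : Real.sqrt (1+y^2)^2 = 1 + y^2 := Real.sq_sqrt (by positivity)

lemma yS_pos (y : ℝ) : 0 < y + Real.sqrt (1+y^2) := by
  have h1 := S_pos y
  have h2 := S_sq y
  nlinarith [abs_nonneg y, sq_abs y, neg_abs_le y]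

lemma dS (y : ℝ) : HasDerivAt (fun y => Real.sqrt (1+y^2)) (y / Real.sqrt (1+y^2)) y := by
  have h : HasDerivAt (fun y : ℝ => 1 + y^2) (2*y) y := by
    simpa using ((hasDerivAt_pow 2 y).const_add 1)
  have := h.sqrt (by positivity)
  convert this using 1
  field_simp

lemma dasinh (y : ℝ) : HasDerivAt (fun y => Real.log (y + Real.sqrt (1+y^2)))
    (1 / Real.sqrt (1+y^2)) y := by
  have d3 : HasDerivAt (fun y : ℝ => y + Real.sqrt (1+y^2)) (1 + y / Real.sqrt (1+y^2)) y :=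
    (hasDerivAt_id y).add (dS y)
  have := d3.log (yS_pos y).ne'
  convert this using 1
  have hS := S_pos y
  have h2 := yS_pos y
  rw [div_eq_div_iff hS.ne' h2.ne']
  field_simp
  ring

lemma I1 : ∫ y in (0:ℝ)..1, Real.sqrt (1+y^2) = (Real.sqrt 2 + Real.log (1+Real.sqrt 2))/2 := by
  have key : ∀ y ∈ Set.uIcc (0:ℝ) 1, HasDerivAt
      (fun y => (y * Real.sqrt (1+y^2) + Real.log (y + Real.sqrt (1+y^2)))/2)
      (Real.sqrt (1+y^2)) y := by
    intro y _
    have d1 : HasDerivAt (fun y => y * Real.sqrt (1+y^2))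
        (1 * Real.sqrt (1+y^2) + y * (y / Real.sqrt (1+y^2))) y := (hasDerivAt_id y).mul (dS y)
    have := (d1.add (dasinh y)).div_const 2
    refine this.congr_deriv ?_
    have hS := S_pos y
    have h2 := S_sq y
    field_simp
    nlinarith
  rw [integral_eq_sub_of_hasDerivAt key (by apply Continuous.intervalIntegrable; fun_prop (disch := positivity))]
  norm_num [Real.sqrt_one]

lemma I2 : ∫ y in (0:ℝ)..1, y^2 * Real.log (1 + Real.sqrt (1+y^2))
    = Real.sqrt 2/6 + Real.log (1+Real.sqrt 2)/6 - 1/9 := by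
  set H : ℝ → ℝ := fun y => y^3/3 * Real.log (1 + Real.sqrt (1+y^2))
    - (1/3)*(y^3/3 - (y * Real.sqrt (1+y^2) + Real.log (y + Real.sqrt (1+y^2)))/2
      + Real.log (y + Real.sqrt (1+y^2))) with hH
  have key : ∀ y ∈ Set.uIcc (0:ℝ) 1, HasDerivAt H
      (y^2 * Real.log (1 + Real.sqrt (1+y^2))) y := by
    intro y _
    have hS := S_pos y
    have hSq := S_sq y
    have h1S : 0 < 1 + Real.sqrt (1+y^2) := by linarith
    have d1 : HasDerivAt (fun y : ℝ => 1 + Real.sqrt (1+y^2)) (0 + y / Real.sqrt (1+y^2)) y :=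
      (hasDerivAt_const y 1).add (dS y)
    have d2 : HasDerivAt (fun y : ℝ => y^3/3) (3*y^2/3) y := by
      simpa using (hasDerivAt_pow 3 y).div_const 3
    have d3 : HasDerivAt (fun y : ℝ => y^3/3 * Real.log (1 + Real.sqrt (1+y^2)))
        ((3*y^2/3) * Real.log (1 + Real.sqrt (1+y^2))
          + y^3/3 * ((0 + y / Real.sqrt (1+y^2)) / (1 + Real.sqrt (1+y^2)))) y :=
      d2.mul (d1.log h1S.ne')
    have d4 : HasDerivAt (fun y => y * Real.sqrt (1+y^2))
        (1 * Real.sqrt (1+y^2) + y * (y / Real.sqrt (1+y^2))) y := (hasDerivAt_id y).mul (dS y)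
    have d5 : HasDerivAt H
        ((3*y^2/3) * Real.log (1 + Real.sqrt (1+y^2))
          + y^3/3 * ((0 + y / Real.sqrt (1+y^2)) / (1 + Real.sqrt (1+y^2)))
          - (1/3)*(3*y^2/3 - (1 * Real.sqrt (1+y^2) + y * (y / Real.sqrt (1+y^2))
              + 1 / Real.sqrt (1+y^2))/2 + 1 / Real.sqrt (1+y^2))) y := by
      exact d3.sub ((((d2.sub ((d4.add (dasinh y)).div_const 2)).add (dasinh y))).const_mul (1/3))
    convert d5 using 1
    rw [eq_comm]
    have expand : y^4 = (Real.sqrt (1+y^2)^2 - 1)^2 := by rw [hSq]; ring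
    field_simp
    nlinarith [expand, hSq, sq_nonneg (Real.sqrt (1+y^2))]
  have hcont : Continuous (fun y : ℝ => y^2 * Real.log (1 + Real.sqrt (1+y^2))) := by
    have h1 : Continuous (fun y : ℝ => 1 + Real.sqrt (1+y^2)) := by fun_prop
    exact (continuous_pow 2).mul (h1.log (fun y => (by positivity : (0:ℝ) < 1 + Real.sqrt (1+y^2)).ne'))
  rw [integral_eq_sub_of_hasDerivAt key (hcont.intervalIntegrable 0 1)]
  have h1 : Real.sqrt (1+(1:ℝ)^2) = Real.sqrt 2 := by norm_num
  have h0 : Real.sqrt (1+(0:ℝ)^2) = 1 := by norm_num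
  simp only [hH, h1, h0]
  norm_num [Real.log_one]
  ring

lemma K1 : ∫ y in (0:ℝ)..1,
    (Real.sqrt (1+y^2)/2 + y^2/2 * Real.log (1+Real.sqrt (1+y^2)) - y^2/2 * Real.log y)
    = (Real.sqrt 2 + Real.log (1+Real.sqrt 2))/3 := by
  have c1 : Continuous (fun y : ℝ => Real.sqrt (1+y^2)) := by fun_prop (disch := positivity)
  have c2 : Continuous (fun y : ℝ => y^2 * Real.log (1 + Real.sqrt (1+y^2))) := by
    have h1 : Continuous (fun y : ℝ => 1 + Real.sqrt (1+y^2)) := by fun_prop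
    exact (continuous_pow 2).mul (h1.log (fun y => (by positivity : (0:ℝ) < 1 + Real.sqrt (1+y^2)).ne'))
  have e : (fun y : ℝ => Real.sqrt (1+y^2)/2 + y^2/2 * Real.log (1+Real.sqrt (1+y^2)) - y^2/2 * Real.log y)
      = fun y : ℝ => (Real.sqrt (1+y^2) + y^2 * Real.log (1+Real.sqrt (1+y^2)) - y^2 * Real.log y)/2 := by
    funext y; ring
  rw [e]
  rw [intervalIntegral.integral_div]
  rw [intervalIntegral.integral_sub (f := fun y : ℝ => Real.sqrt (1+y^2) + y^2 * Real.log (1 + Real.sqrt (1+y^2))) (((c1.add c2).intervalIntegrable 0 1)) (cont_sq_log.intervalIntegrable 0 1)]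
  rw [intervalIntegral.integral_add (c1.intervalIntegrable 0 1) (c2.intervalIntegrable 0 1)]
  rw [I1, I2, I3]
  ring

lemma unit_square : ∫ x in (0:ℝ)..1, ∫ y in (0:ℝ)..1, Real.sqrt ((x^2+y^2)/2)
    = (2 + Real.sqrt 2 * Real.log (1+Real.sqrt 2))/6 := by
  have hs2 : Real.sqrt 2 > 0 := by positivity
  have hmul : Real.sqrt 2 * Real.sqrt 2 = 2 := Real.mul_self_sqrt (by norm_num)
  have inner : ∀ x ∈ Set.uIcc (0:ℝ) 1, (∫ y in (0:ℝ)..1, Real.sqrt ((x^2+y^2)/2))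
      = (Real.sqrt 2)⁻¹ * (Real.sqrt (1+x^2)/2 + x^2/2 * Real.log (1+Real.sqrt (1+x^2)) - x^2/2 * Real.log x) := by
    intro x hx
    rw [Set.uIcc_of_le (by norm_num)] at hx
    have e1 : (fun y : ℝ => Real.sqrt ((x^2+y^2)/2)) = fun y : ℝ => (Real.sqrt 2)⁻¹ * Real.sqrt (y^2+x^2) := by
      funext y
      rw [show (x^2+y^2)/2 = (y^2+x^2)/2 by ring, show ((y^2+x^2)/2) = (y^2+x^2) * (2:ℝ)⁻¹ by ring,
        Real.sqrt_mul (by positivity), mul_comm]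
      congr 1
      exact Real.sqrt_inv 2
    rw [e1, intervalIntegral.integral_const_mul]
    rcases eq_or_lt_of_le hx.1 with rfl | hxpos
    · simp only [Real.log_zero]
      norm_num
      rw [show (fun y : ℝ => Real.sqrt (y^2)) = fun y : ℝ => |y| from funext fun y => Real.sqrt_sq_eq_abs y]
      rw [show (∫ y in (0:ℝ)..1, |y|) = ∫ y in (0:ℝ)..1, y from
        intervalIntegral.integral_congr (fun y hy => by
          rw [Set.uIcc_of_le (by norm_num)] at hy
          exact abs_of_nonneg hy.1)]
      rw [integral_id]
      norm_num
    · rw [inner_int hxpos]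
  rw [intervalIntegral.integral_congr inner, intervalIntegral.integral_const_mul, K1]
  rw [eq_div_iff (by norm_num : (6:ℝ) ≠ 0)]
  field_simp
  linear_combination (-3 * Real.log (1+Real.sqrt 2)) * hmul

-- numeric lemma
lemma sqrt2_lb : (1.414:ℝ) < Real.sqrt 2 := by
  rw [show (1.414:ℝ) = Real.sqrt (1.414^2) from (Real.sqrt_sq (by norm_num)).symm]
  apply Real.sqrt_lt_sqrt (by positivity)
  norm_num

lemma log_lb : (3/4:ℝ) < Real.log (1 + Real.sqrt 2) := by
  rw [Real.lt_log_iff_exp_lt (by positivity)]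
  have e3 : Real.exp 3 < 20.1 := by
    have h := Real.exp_one_lt_d9
    have : Real.exp 3 = Real.exp 1 ^ 3 := by
      rw [← Real.exp_nat_mul]; norm_num
    rw [this]
    calc Real.exp 1 ^ 3 < 2.7182818286^3 :=
          pow_lt_pow_left₀ h (Real.exp_pos 1).le (by norm_num)
    _ < 20.1 := by norm_num
  have key : Real.exp (3/4) ^ 4 < (1 + Real.sqrt 2)^4 := by
    have h1 : Real.exp (3/4) ^ 4 = Real.exp 3 := by
      rw [← Real.exp_nat_mul]; norm_num
    have h2 : (2.414:ℝ)^4 ≤ (1 + Real.sqrt 2)^4 := by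
      apply pow_le_pow_left₀ (by norm_num)
      linarith [sqrt2_lb]
    calc Real.exp (3/4) ^ 4 = Real.exp 3 := h1
    _ < 20.1 := e3
    _ ≤ (2.414:ℝ)^4 := by norm_num
    _ ≤ _ := h2
  exact lt_of_pow_lt_pow_left₀ 4 (by positivity) key

lemma sqrt2_log_gt_one : 1 < Real.sqrt 2 * Real.log (1 + Real.sqrt 2) := by
  nlinarith [sqrt2_lb, log_lb, Real.log_pos (by nlinarith [sqrt2_lb] : (1:ℝ) < 1 + Real.sqrt 2)]

lemma cont_g : Continuous (fun p : ℝ × ℝ => Real.sqrt ((p.1^2 + p.2^2)/2)) :=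
  Real.continuous_sqrt.comp (by fun_prop)

set_option maxHeartbeats 2000000 in
theorem Ir_bounds (a b : ℝ) (ha : 0 < a) (hab : a < b) :
    (a + b) / 2 <
      (1 / (b - a)^2) * (∫ x in a..b, ∫ y in a..b, Real.sqrt ((x^2 + y^2) / 2)) ∧
    (1 / (b - a)^2) * (∫ x in a..b, ∫ y in a..b, Real.sqrt ((x^2 + y^2) / 2)) <
      ((2 + Real.sqrt 2 * Real.log (1 + Real.sqrt 2)) / 3) * ((a + b) / 2) := by
  have hs : 0 < b - a := by linarith
  set s : ℝ := b - a with hsdef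
  set T : ℝ := ∫ x in a..b, ∫ y in a..b, Real.sqrt ((x^2 + y^2) / 2) with hT
  -- continuity facts
  have cg : ∀ x : ℝ, Continuous (fun y => Real.sqrt ((x^2 + y^2)/2)) := by
    intro x; fun_prop
  have cparam : ∀ u v : ℝ, Continuous (fun x : ℝ => ∫ y in u..v, Real.sqrt ((x^2 + y^2)/2)) := by
    intro u v
    exact intervalIntegral.continuous_parametric_intervalIntegral_of_continuous'
      (f := fun x y => Real.sqrt ((x^2 + y^2)/2)) (μ := MeasureTheory.volume) cont_g u v
  constructor
  · -- LOWER BOUND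
    have strict : (∫ x in a..b, ∫ y in a..b, (x+y)/2) < T := by
      apply intervalIntegral.integral_lt_integral_of_continuousOn_of_le_of_exists_lt hab
      · exact (intervalIntegral.continuous_parametric_intervalIntegral_of_continuous'
          (f := fun x y => (x+y)/2) (μ := MeasureTheory.volume) (by fun_prop) a b).continuousOn
      · exact (cparam a b).continuousOn
      · intro x hx
        apply intervalIntegral.integral_mono_on hab.le
          (by apply Continuous.intervalIntegrable; fun_prop)
          ((cg x).intervalIntegrable a b)
        intro y hy
        exact qm_am (by linarith [hx.1]) (by linarith [hy.1])
      · refine ⟨a, Set.left_mem_Icc.mpr hab.le, ?_⟩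
        apply intervalIntegral.integral_lt_integral_of_continuousOn_of_le_of_exists_lt hab
          (by apply Continuous.continuousOn; fun_prop) ((cg a).continuousOn)
        · intro y hy
          exact qm_am ha.le (by linarith [hy.1])
        · refine ⟨b, Set.right_mem_Icc.mpr hab.le, qm_am_strict ha.le (by linarith) hab.ne⟩
    have lhs_eval : (∫ x in a..b, ∫ y in a..b, (x+y)/2) = s^2 * (a+b)/2 := by
      have inner_eval : ∀ x : ℝ, (∫ y in a..b, (x+y)/2) = s*x/2 + (b^2-a^2)/4 := by
        intro x
        have : (fun y : ℝ => (x+y)/2) = fun y : ℝ => x/2 + y/2 := by funext y; ring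
        rw [this, intervalIntegral.integral_add (intervalIntegrable_const)
          (by apply Continuous.intervalIntegrable; fun_prop)]
        simp [intervalIntegral.integral_div, integral_id]
        ring
      simp only [inner_eval]
      rw [intervalIntegral.integral_add (by apply Continuous.intervalIntegrable; fun_prop)
        (intervalIntegrable_const)]
      have : (fun x : ℝ => s*x/2) = fun x : ℝ => (s/2) * x := by funext x; ring
      rw [this, intervalIntegral.integral_const_mul]
      simp [integral_id]
      rw [hsdef]; ring
    rw [lhs_eval] at strict
    have heq : (a+b)/2 = 1/s^2 * (s^2*(a+b)/2) := by field_simp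
    rw [heq]
    exact mul_lt_mul_of_pos_left strict (by positivity)
  · -- UPPER BOUND
    have cga : ∀ u : ℝ, Continuous (fun v => Real.sqrt (((a+u)^2 + (a+v)^2)/2)) := by
      intro u; fun_prop
    have cgs : ∀ u : ℝ, Continuous (fun v => a + Real.sqrt ((u^2 + v^2)/2)) := by
      intro u; fun_prop
    have hab' : a + s = b := by rw [hsdef]; ring
    have shift : T = ∫ u in (0:ℝ)..s, ∫ v in (0:ℝ)..s, Real.sqrt (((a+u)^2 + (a+v)^2)/2) := by
      have inner_shift : ∀ x : ℝ, (∫ y in a..b, Real.sqrt ((x^2 + y^2)/2))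
          = ∫ v in (0:ℝ)..s, Real.sqrt ((x^2 + (a+v)^2)/2) := by
        intro x
        have := intervalIntegral.integral_comp_add_left (a := 0) (b := s)
          (fun y => Real.sqrt ((x^2 + y^2)/2)) a
        rw [add_zero, hab'] at this
        rw [this]
      have outer := intervalIntegral.integral_comp_add_left (a := 0) (b := s)
        (fun x => ∫ v in (0:ℝ)..s, Real.sqrt ((x^2 + (a+v)^2)/2)) a
      rw [add_zero, hab'] at outer
      rw [hT]
      simp only [inner_shift]
      rw [outer]
    have mono1 : (∫ u in (0:ℝ)..s, ∫ v in (0:ℝ)..s, Real.sqrt (((a+u)^2 + (a+v)^2)/2))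
        ≤ ∫ u in (0:ℝ)..s, ∫ v in (0:ℝ)..s, (a + Real.sqrt ((u^2 + v^2)/2)) := by
      apply intervalIntegral.integral_mono_on hs.le
      · exact (intervalIntegral.continuous_parametric_intervalIntegral_of_continuous'
          (f := fun u v => Real.sqrt (((a+u)^2 + (a+v)^2)/2)) (μ := MeasureTheory.volume)
          (by fun_prop) 0 s).intervalIntegrable 0 s
      · exact (intervalIntegral.continuous_parametric_intervalIntegral_of_continuous'
          (f := fun u v => a + Real.sqrt ((u^2 + v^2)/2)) (μ := MeasureTheory.volume)
          (by fun_prop) 0 s).intervalIntegrable 0 s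
      · intro u hu
        apply intervalIntegral.integral_mono_on hs.le ((cga u).intervalIntegrable 0 s)
          ((cgs u).intervalIntegrable 0 s)
        intro v hv
        exact tri ha.le hu.1 hv.1
    have split : (∫ u in (0:ℝ)..s, ∫ v in (0:ℝ)..s, (a + Real.sqrt ((u^2 + v^2)/2)))
        = a*s^2 + ∫ u in (0:ℝ)..s, ∫ v in (0:ℝ)..s, Real.sqrt ((u^2 + v^2)/2) := by
      have inner_eq : ∀ u : ℝ, (∫ v in (0:ℝ)..s, (a + Real.sqrt ((u^2 + v^2)/2)))
          = s*a + ∫ v in (0:ℝ)..s, Real.sqrt ((u^2 + v^2)/2) := by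
        intro u
        rw [intervalIntegral.integral_add intervalIntegrable_const
          ((cg u).intervalIntegrable 0 s)]
        simp
      simp only [inner_eq]
      rw [intervalIntegral.integral_add intervalIntegrable_const
        ((intervalIntegral.continuous_parametric_intervalIntegral_of_continuous'
          (f := fun u v => Real.sqrt ((u^2 + v^2)/2)) (μ := MeasureTheory.volume)
          cont_g 0 s).intervalIntegrable 0 s)]
      simp
      ring
    have scale : (∫ u in (0:ℝ)..s, ∫ v in (0:ℝ)..s, Real.sqrt ((u^2 + v^2)/2))
        = s^3 * ((2 + Real.sqrt 2 * Real.log (1 + Real.sqrt 2))/6) := by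
      have inner_sc : ∀ u : ℝ, (∫ v in (0:ℝ)..s, Real.sqrt ((u^2 + v^2)/2))
          = s * ∫ w in (0:ℝ)..1, Real.sqrt ((u^2 + (s*w)^2)/2) := by
        intro u
        have := intervalIntegral.smul_integral_comp_mul_left (a := 0) (b := 1)
          (fun v => Real.sqrt ((u^2 + v^2)/2)) s
        simp only [smul_eq_mul, mul_zero, mul_one] at this
        rw [← this]
      simp only [inner_sc]
      rw [intervalIntegral.integral_const_mul]
      have outer_sc : (∫ u in (0:ℝ)..s, ∫ w in (0:ℝ)..1, Real.sqrt ((u^2 + (s*w)^2)/2))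
          = s * ∫ t in (0:ℝ)..1, ∫ w in (0:ℝ)..1, Real.sqrt (((s*t)^2 + (s*w)^2)/2) := by
        have := intervalIntegral.smul_integral_comp_mul_left (a := 0) (b := 1)
          (fun u => ∫ w in (0:ℝ)..1, Real.sqrt ((u^2 + (s*w)^2)/2)) s
        simp only [smul_eq_mul, mul_zero, mul_one] at this
        rw [← this]
      rw [outer_sc]
      have hom : ∀ t w : ℝ, Real.sqrt (((s*t)^2 + (s*w)^2)/2)
          = s * Real.sqrt ((t^2 + w^2)/2) := fun t w => homog hs.le
      simp only [hom]
      simp only [intervalIntegral.integral_const_mul]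
      rw [unit_square]
      ring
    have upper : T ≤ a*s^2 + s^3 * ((2 + Real.sqrt 2 * Real.log (1 + Real.sqrt 2))/6) := by
      rw [shift, ← scale, ← split]
      exact mono1
    calc 1/s^2 * T ≤ 1/s^2 * (a*s^2 + s^3 * ((2 + Real.sqrt 2 * Real.log (1 + Real.sqrt 2))/6)) :=
          mul_le_mul_of_nonneg_left upper (by positivity)
    _ = a + s * ((2 + Real.sqrt 2 * Real.log (1 + Real.sqrt 2))/6) := by field_simp
    _ < ((2 + Real.sqrt 2 * Real.log (1 + Real.sqrt 2))/3) * ((a+b)/2) := by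
        have hb : a + b = 2*a + s := by rw [hsdef]; ring
        rw [hb]
        nlinarith [mul_pos (sub_pos.mpr sqrt2_log_gt_one) ha, hs]
end

section
/- Let M be a mean function, φ : [0,1] → [0,∞) integrable, and ψ : ℝ₊ → ℝ₊ a 1-Lipschitz function. Then S(a,b) := −∫₀¹φ(t)dt + (a+b)/2 − (ψ(a)+ψ(b))/2 + ∫₀¹ M(φ(t)+ψ(a), φ(t)+ψ(b)) dt satisfies min{a,b} ≤ S(a,b) ≤ max{a,b} and S(a,b) = S(b,a) for all a, b > 0. -/
open MeasureTheory intervalIntegral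

theorem S_is_mean (M : ℝ → ℝ → ℝ) (φ ψ : ℝ → ℝ)
    (hMmean : ∀ x y : ℝ, 0 < x → 0 < y → min x y ≤ M x y ∧ M x y ≤ max x y)
    (hMsymm : ∀ x y : ℝ, 0 < x → 0 < y → M x y = M y x)
    (hφint : IntegrableOn φ (Set.Icc 0 1) volume)
    (hφnn : ∀ t ∈ Set.Icc (0:ℝ) 1, 0 ≤ φ t)
    (hψpos : ∀ x : ℝ, 0 < x → 0 < ψ x)
    (hψlip : ∀ x y : ℝ, 0 < x → 0 < y → |ψ x - ψ y| ≤ |x - y|)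
    (a b : ℝ) (ha : 0 < a) (hb : 0 < b)
    (hint : IntervalIntegrable (fun t => M (φ t + ψ a) (φ t + ψ b)) volume 0 1)
    (hint' : IntervalIntegrable (fun t => M (φ t + ψ b) (φ t + ψ a)) volume 0 1) :
    (min a b ≤ -(∫ t in (0:ℝ)..1, φ t) + (a + b) / 2 - (ψ a + ψ b) / 2 +
        ∫ t in (0:ℝ)..1, M (φ t + ψ a) (φ t + ψ b)) ∧
    (-(∫ t in (0:ℝ)..1, φ t) + (a + b) / 2 - (ψ a + ψ b) / 2 +
        (∫ t in (0:ℝ)..1, M (φ t + ψ a) (φ t + ψ b)) ≤ max a b) ∧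
    (-(∫ t in (0:ℝ)..1, φ t) + (a + b) / 2 - (ψ a + ψ b) / 2 +
        (∫ t in (0:ℝ)..1, M (φ t + ψ a) (φ t + ψ b)) =
      -(∫ t in (0:ℝ)..1, φ t) + (b + a) / 2 - (ψ b + ψ a) / 2 +
        ∫ t in (0:ℝ)..1, M (φ t + ψ b) (φ t + ψ a)) := by
  have hc := hψpos a ha
  have hd := hψpos b hb
  have hφI : IntervalIntegrable φ volume 0 1 := by
    rw [intervalIntegrable_iff_integrableOn_Ioc_of_le zero_le_one]
    exact hφint.mono_set Set.Ioc_subset_Icc_self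
  have hpos : ∀ t ∈ Set.Icc (0:ℝ) 1, 0 < φ t + ψ a ∧ 0 < φ t + ψ b := by
    intro t ht
    constructor <;> have := hφnn t ht <;> linarith
  -- lower bound on the integral of M
  have hlow : (∫ t in (0:ℝ)..1, (φ t + min (ψ a) (ψ b))) ≤
      ∫ t in (0:ℝ)..1, M (φ t + ψ a) (φ t + ψ b) := by
    apply intervalIntegral.integral_mono_on zero_le_one
      (hφI.add intervalIntegrable_const) hint
    intro t ht
    obtain ⟨h1, h2⟩ := hpos t ht
    have := (hMmean _ _ h1 h2).1
    calc φ t + min (ψ a) (ψ b) = min (φ t + ψ a) (φ t + ψ b) := by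
          rcases le_total (ψ a) (ψ b) with h | h
          · rw [min_eq_left h, min_eq_left (by linarith)]
          · rw [min_eq_right h, min_eq_right (by linarith)]
      _ ≤ _ := this
  have hhigh : (∫ t in (0:ℝ)..1, M (φ t + ψ a) (φ t + ψ b)) ≤
      ∫ t in (0:ℝ)..1, (φ t + max (ψ a) (ψ b)) := by
    apply intervalIntegral.integral_mono_on zero_le_one hint
      (hφI.add intervalIntegrable_const)
    intro t ht
    obtain ⟨h1, h2⟩ := hpos t ht
    have := (hMmean _ _ h1 h2).2
    calc M (φ t + ψ a) (φ t + ψ b) ≤ max (φ t + ψ a) (φ t + ψ b) := this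
      _ = φ t + max (ψ a) (ψ b) := by
          rcases le_total (ψ a) (ψ b) with h | h
          · rw [max_eq_right h, max_eq_right (by linarith)]
          · rw [max_eq_left h, max_eq_left (by linarith)]
  have heq1 : (∫ t in (0:ℝ)..1, (φ t + min (ψ a) (ψ b))) =
      (∫ t in (0:ℝ)..1, φ t) + min (ψ a) (ψ b) := by
    rw [intervalIntegral.integral_add hφI intervalIntegrable_const,
      intervalIntegral.integral_const] ; simp
  have heq2 : (∫ t in (0:ℝ)..1, (φ t + max (ψ a) (ψ b))) =
      (∫ t in (0:ℝ)..1, φ t) + max (ψ a) (ψ b) := by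
    rw [intervalIntegral.integral_add hφI intervalIntegrable_const,
      intervalIntegral.integral_const] ; simp
  have hlipab := hψlip a b ha hb
  have habs : |ψ a - ψ b| ≤ |a - b| := hlipab
  refine ⟨?_, ?_, ?_⟩
  · rw [heq1] at hlow
    rcases le_total a b with h | h
    · have he : |a - b| = b - a := by rw [abs_sub_comm, abs_of_nonneg (by linarith)]
      rw [he] at habs
      rcases abs_le.mp habs with ⟨hA, hB⟩
      rcases le_total (ψ a) (ψ b) with h' | h' <;>
        simp only [min_eq_left h, min_eq_left h', min_eq_right h'] at hlow ⊢ <;> linarith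
    · have he : |a - b| = a - b := abs_of_nonneg (by linarith)
      rw [he] at habs
      rcases abs_le.mp habs with ⟨hA, hB⟩
      rcases le_total (ψ a) (ψ b) with h' | h' <;>
        simp only [min_eq_right h, min_eq_left h', min_eq_right h'] at hlow ⊢ <;> linarith
  · rw [heq2] at hhigh
    rcases le_total a b with h | h
    · have he : |a - b| = b - a := by rw [abs_sub_comm, abs_of_nonneg (by linarith)]
      rw [he] at habs
      rcases abs_le.mp habs with ⟨hA, hB⟩
      rcases le_total (ψ a) (ψ b) with h' | h' <;>
        simp only [max_eq_right h, max_eq_left h', max_eq_right h'] at hhigh ⊢ <;> linarith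
    · have he : |a - b| = a - b := abs_of_nonneg (by linarith)
      rw [he] at habs
      rcases abs_le.mp habs with ⟨hA, hB⟩
      rcases le_total (ψ a) (ψ b) with h' | h' <;>
        simp only [max_eq_left h, max_eq_left h', max_eq_right h'] at hhigh ⊢ <;> linarith
  · have : (∫ t in (0:ℝ)..1, M (φ t + ψ a) (φ t + ψ b)) =
        ∫ t in (0:ℝ)..1, M (φ t + ψ b) (φ t + ψ a) := by
      apply intervalIntegral.integral_congr
      intro t ht
      rw [Set.uIcc_of_le zero_le_one] at ht
      obtain ⟨h1, h2⟩ := hpos t ht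
      exact hMsymm _ _ h1 h2
    rw [this]; ring
end

section
/- Let M be a mean function, φ : [0,1] → ℝ₊ integrable with ∫₀¹φ(t)dt > 0, and ψ : ℝ₊ → ℝ₊ a 1-Lipschitz function. Then P(a,b) := (a+b)/2 − (ψ(a)+ψ(b))/2 + (1/∫₀¹φ(t)dt)·∫₀¹ M(φ(t)·ψ(a), φ(t)·ψ(b)) dt satisfies min{a,b} ≤ P(a,b) ≤ max{a,b} for all a, b > 0. -/
open MeasureTheory intervalIntegral

theorem P_is_mean (M : ℝ → ℝ → ℝ) (φ ψ : ℝ → ℝ)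
    (hMmean : ∀ x y : ℝ, 0 < x → 0 < y → min x y ≤ M x y ∧ M x y ≤ max x y)
    (hMsymm : ∀ x y : ℝ, 0 < x → 0 < y → M x y = M y x)
    (hφint : IntegrableOn φ (Set.Icc 0 1) volume)
    (hφpos : ∀ t ∈ Set.Icc (0:ℝ) 1, 0 < φ t)
    (hφbar : 0 < ∫ t in (0:ℝ)..1, φ t)
    (hψpos : ∀ x : ℝ, 0 < x → 0 < ψ x)
    (hψlip : ∀ x y : ℝ, 0 < x → 0 < y → |ψ x - ψ y| ≤ |x - y|)
    (a b : ℝ) (ha : 0 < a) (hb : 0 < b)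
    (hint : IntervalIntegrable (fun t => M (φ t * ψ a) (φ t * ψ b)) volume 0 1) :
    min a b ≤ (a + b) / 2 - (ψ a + ψ b) / 2 +
        (1 / ∫ t in (0:ℝ)..1, φ t) * ∫ t in (0:ℝ)..1, M (φ t * ψ a) (φ t * ψ b) ∧
    (a + b) / 2 - (ψ a + ψ b) / 2 +
        (1 / ∫ t in (0:ℝ)..1, φ t) * (∫ t in (0:ℝ)..1, M (φ t * ψ a) (φ t * ψ b)) ≤
      max a b := by
  have hψa := hψpos a ha
  have hψb := hψpos b hb
  set c := ∫ t in (0:ℝ)..1, φ t with hc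
  set I := ∫ t in (0:ℝ)..1, M (φ t * ψ a) (φ t * ψ b) with hI
  set m := min (ψ a) (ψ b) with hm
  set Mx := max (ψ a) (ψ b) with hMx
  have hφI : IntervalIntegrable φ volume 0 1 := by
    apply IntegrableOn.intervalIntegrable
    rwa [Set.uIcc_of_le (by norm_num : (0:ℝ) ≤ 1)]
  have hlow : ∀ t ∈ Set.Icc (0:ℝ) 1, φ t * m ≤ M (φ t * ψ a) (φ t * ψ b) := by
    intro t ht
    have hφt := hφpos t ht
    have h1 := (hMmean _ _ (mul_pos hφt hψa) (mul_pos hφt hψb)).1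
    refine le_trans ?_ h1
    exact le_min (mul_le_mul_of_nonneg_left (min_le_left _ _) hφt.le)
      (mul_le_mul_of_nonneg_left (min_le_right _ _) hφt.le)
  have hhigh : ∀ t ∈ Set.Icc (0:ℝ) 1, M (φ t * ψ a) (φ t * ψ b) ≤ φ t * Mx := by
    intro t ht
    have hφt := hφpos t ht
    have h1 := (hMmean _ _ (mul_pos hφt hψa) (mul_pos hφt hψb)).2
    refine h1.trans ?_
    exact max_le (mul_le_mul_of_nonneg_left (le_max_left _ _) hφt.le)
      (mul_le_mul_of_nonneg_left (le_max_right _ _) hφt.le)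
  have hIlow : c * m ≤ I := by
    have := intervalIntegral.integral_mono_on (by norm_num : (0:ℝ) ≤ 1)
      (hφI.mul_const m) hint hlow
    simpa [intervalIntegral.integral_mul_const] using this
  have hIhigh : I ≤ c * Mx := by
    have := intervalIntegral.integral_mono_on (by norm_num : (0:ℝ) ≤ 1)
      hint (hφI.mul_const Mx) hhigh
    simpa [intervalIntegral.integral_mul_const] using this
  have hcne : c ≠ 0 := ne_of_gt hφbar
  have hcinv : (0:ℝ) < 1 / c := by positivity
  have key1 : m ≤ (1 / c) * I := by
    have h := mul_le_mul_of_nonneg_left hIlow hcinv.le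
    have e : (1 / c) * (c * m) = m := by field_simp
    linarith
  have key2 : (1 / c) * I ≤ Mx := by
    have h := mul_le_mul_of_nonneg_left hIhigh hcinv.le
    have e : (1 / c) * (c * Mx) = Mx := by field_simp
    linarith
  have habs := hψlip a b ha hb
  have h1 : m + Mx = ψ a + ψ b := min_add_max _ _
  have h2 : Mx - m = |ψ a - ψ b| := by rw [abs_sub_comm]; exact max_sub_min_eq_abs _ _
  have h3 : min a b + max a b = a + b := min_add_max _ _
  have h4 : max a b - min a b = |a - b| := by rw [abs_sub_comm]; exact max_sub_min_eq_abs _ _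
  constructor
  · linarith
  · linarith
end

section
/- For a, b > 0 with a ≠ b and φ : [0,1] → [0,∞) integrable with ∫₀¹φ(t)dt over a set of positive measure where φ > 0, the quantity I_φ(a,b) = −∫₀¹φ(t)dt + ∫₀¹ √((φ(t)+a)(φ(t)+b)) dt is strictly greater than √(ab). -/
open MeasureTheory intervalIntegral

theorem I_phi_gt_G (a b : ℝ) (ha : 0 < a) (hb : 0 < b) (hab : a ≠ b)
    (φ : ℝ → ℝ)
    (hφint : IntegrableOn φ (Set.Icc 0 1) volume)
    (hφnn : ∀ t ∈ Set.Icc (0:ℝ) 1, 0 ≤ φ t)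
    (hφpos : 0 < volume {t ∈ Set.Icc (0:ℝ) 1 | 0 < φ t}) :
    Real.sqrt (a * b) <
      -(∫ t in (0:ℝ)..1, φ t) +
        ∫ t in (0:ℝ)..1, Real.sqrt ((φ t + a) * (φ t + b)) := by
  have hab' : (0:ℝ) < a * b := mul_pos ha hb
  set s := Real.sqrt (a * b) with hs
  have hs2 : s ^ 2 = a * b := Real.sq_sqrt hab'.le
  have hs0 : 0 ≤ s := Real.sqrt_nonneg _
  have hamgm : 2 * s < a + b := by
    rcases lt_or_gt_of_ne hab with h | h <;>
      nlinarith [sq_nonneg (a - b), sq_nonneg (a + b - 2 * s), sq_nonneg (a + b + 2 * s)]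
  set M := max a b with hM
  have hMa : a ≤ M := le_max_left a b
  have hMb : b ≤ M := le_max_right a b
  have hM0 : 0 < M := lt_of_lt_of_le ha hMa
  set F := fun t => Real.sqrt ((φ t + a) * (φ t + b)) with hF
  have hle : ∀ x : ℝ, 0 ≤ x → x + s ≤ Real.sqrt ((x + a) * (x + b)) := by
    intro x hx
    have h1 : (x + s) ^ 2 ≤ (x + a) * (x + b) := by nlinarith
    calc x + s = Real.sqrt ((x + s) ^ 2) := (Real.sqrt_sq (by positivity)).symm
      _ ≤ _ := Real.sqrt_le_sqrt h1
  have hlt : ∀ x : ℝ, 0 < x → x + s < Real.sqrt ((x + a) * (x + b)) := by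
    intro x hx
    have h1 : (x + s) ^ 2 < (x + a) * (x + b) := by nlinarith
    calc x + s = Real.sqrt ((x + s) ^ 2) := (Real.sqrt_sq (by positivity)).symm
      _ < _ := Real.sqrt_lt_sqrt (by positivity) h1
  have hub : ∀ x : ℝ, 0 ≤ x → Real.sqrt ((x + a) * (x + b)) ≤ x + M := by
    intro x hx
    have h1 : (x + a) * (x + b) ≤ (x + M) ^ 2 := by nlinarith
    calc Real.sqrt ((x + a) * (x + b)) ≤ Real.sqrt ((x + M) ^ 2) := Real.sqrt_le_sqrt h1
      _ = x + M := Real.sqrt_sq (by positivity)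
  have hIcc : MeasurableSet (Set.Icc (0:ℝ) 1) := measurableSet_Icc
  have hφnn' : ∀ᵐ t ∂(volume.restrict (Set.Icc (0:ℝ) 1)), 0 ≤ φ t :=
    (ae_restrict_iff' hIcc).2 (ae_of_all _ hφnn)
  have hφae : AEStronglyMeasurable φ (volume.restrict (Set.Icc (0:ℝ) 1)) :=
    hφint.aestronglyMeasurable
  have hFmeas : AEStronglyMeasurable F (volume.restrict (Set.Icc (0:ℝ) 1)) := by
    have : AEMeasurable (fun t => (φ t + a) * (φ t + b))
        (volume.restrict (Set.Icc (0:ℝ) 1)) :=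
      (hφae.aemeasurable.add_const a).mul (hφae.aemeasurable.add_const b)
    exact (Real.continuous_sqrt.measurable.comp_aemeasurable this).aestronglyMeasurable
  have hbound : IntegrableOn (fun t => φ t + M) (Set.Icc (0:ℝ) 1) volume :=
    hφint.add (integrableOn_const measure_Icc_lt_top.ne)
  have hFint : IntegrableOn F (Set.Icc (0:ℝ) 1) volume := by
    refine Integrable.mono' hbound hFmeas ?_
    filter_upwards [hφnn'] with t ht
    have h1 := hub (φ t) ht
    have h2 : 0 ≤ F t := Real.sqrt_nonneg _
    rw [Real.norm_eq_abs, abs_of_nonneg h2]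
    exact h1
  set g := fun t => F t - (φ t + s) with hg
  have hgint : IntegrableOn g (Set.Icc (0:ℝ) 1) volume :=
    hFint.sub (hφint.add (integrableOn_const measure_Icc_lt_top.ne))
  have hgnn : ∀ᵐ t ∂(volume.restrict (Set.Icc (0:ℝ) 1)), 0 ≤ g t := by
    filter_upwards [hφnn'] with t ht
    have := hle (φ t) ht
    simp only [hg]; linarith
  have hgpos : 0 < ∫ t in Set.Icc (0:ℝ) 1, g t := by
    rw [integral_pos_iff_support_of_nonneg_ae hgnn hgint]
    have hsub : {t ∈ Set.Icc (0:ℝ) 1 | 0 < φ t} ⊆ Function.support g ∩ Set.Icc 0 1 := by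
      rintro t ⟨htI, htp⟩
      refine ⟨?_, htI⟩
      have := hlt (φ t) htp
      simp only [Function.mem_support, hg]
      intro h; linarith [sub_eq_zero.mp h]
    calc (0:ENNReal) < volume {t ∈ Set.Icc (0:ℝ) 1 | 0 < φ t} := hφpos
      _ ≤ volume (Function.support g ∩ Set.Icc 0 1) := measure_mono hsub
      _ = (volume.restrict (Set.Icc (0:ℝ) 1)) (Function.support g) :=
        (Measure.restrict_apply' hIcc).symm
  have hconst : ∫ t in Set.Icc (0:ℝ) 1, s = s := by
    simp [Real.volume_Icc]
  have h1 : IntegrableOn (fun t => φ t + s) (Set.Icc (0:ℝ) 1) volume :=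
    hφint.add (integrableOn_const measure_Icc_lt_top.ne)
  have h2 : ∫ t in Set.Icc (0:ℝ) 1, (φ t + s) =
      (∫ t in Set.Icc (0:ℝ) 1, φ t) + ∫ t in Set.Icc (0:ℝ) 1, s :=
    integral_add hφint (integrableOn_const measure_Icc_lt_top.ne)
  have h3 : ∫ t in Set.Icc (0:ℝ) 1, g t =
      (∫ t in Set.Icc (0:ℝ) 1, F t) - ∫ t in Set.Icc (0:ℝ) 1, (φ t + s) :=
    integral_sub hFint h1
  have hsplit : ∫ t in Set.Icc (0:ℝ) 1, g t =
      (∫ t in Set.Icc (0:ℝ) 1, F t) - ((∫ t in Set.Icc (0:ℝ) 1, φ t) + s) := by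
    rw [h3, h2, hconst]
  have hIφ : ∫ t in (0:ℝ)..1, φ t = ∫ t in Set.Icc (0:ℝ) 1, φ t := by
    rw [intervalIntegral.integral_of_le zero_le_one, ← integral_Icc_eq_integral_Ioc]
  have hIF : ∫ t in (0:ℝ)..1, F t = ∫ t in Set.Icc (0:ℝ) 1, F t := by
    rw [intervalIntegral.integral_of_le zero_le_one, ← integral_Icc_eq_integral_Ioc]
  show s < -(∫ t in (0:ℝ)..1, φ t) + ∫ t in (0:ℝ)..1, F t
  rw [hIφ, hIF]
  linarith [hsplit ▸ hgpos]
end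

section
/- Let M be a mean function. Then for all a, b > 0, 2·A(a,b) − √(a²+b²) ≤ ∫₀^{π/2} M(a·sin θ, b·cos θ) dθ ≤ √(a²+b²), where A(a,b) = (a+b)/2. -/
open MeasureTheory intervalIntegral Real

lemma sin_cos_arctan_div {a b : ℝ} (ha : 0 < a) (hb : 0 < b) :
    Real.cos (Real.arctan (b / a)) = a / Real.sqrt (a^2 + b^2) ∧
    Real.sin (Real.arctan (b / a)) = b / Real.sqrt (a^2 + b^2) := by
  have h1 : (1 : ℝ) + (b / a) ^ 2 = (a^2 + b^2) / a^2 := by field_simp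
  have h2 : Real.sqrt ((a^2+b^2) / a^2) = Real.sqrt (a^2+b^2) / a := by
    rw [Real.sqrt_div (by positivity), Real.sqrt_sq ha.le]
  have hc : 0 < Real.sqrt (a^2 + b^2) := Real.sqrt_pos.mpr (by positivity)
  constructor
  · rw [Real.cos_arctan, h1, h2]
    field_simp
  · rw [Real.sin_arctan, h1, h2]
    field_simp

theorem Shat_bounds (M : ℝ → ℝ → ℝ)
    (hMmean : ∀ x y : ℝ, 0 < x → 0 < y → min x y ≤ M x y ∧ M x y ≤ max x y)
    (hMsymm : ∀ x y : ℝ, 0 < x → 0 < y → M x y = M y x)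
    (a b : ℝ) (ha : 0 < a) (hb : 0 < b)
    (hint : IntervalIntegrable (fun θ => M (a * Real.sin θ) (b * Real.cos θ))
      volume 0 (Real.pi / 2)) :
    2 * ((a + b) / 2) - Real.sqrt (a^2 + b^2) ≤
      (∫ θ in (0:ℝ)..(Real.pi / 2), M (a * Real.sin θ) (b * Real.cos θ)) ∧
    (∫ θ in (0:ℝ)..(Real.pi / 2), M (a * Real.sin θ) (b * Real.cos θ)) ≤
      Real.sqrt (a^2 + b^2) := by
  set c := Real.sqrt (a^2 + b^2) with hc_def
  have hcpos : 0 < c := Real.sqrt_pos.mpr (by positivity)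
  set θ₀ := Real.arctan (b / a) with hθ₀_def
  obtain ⟨hcos, hsin⟩ := sin_cos_arctan_div ha hb
  have hθ₀pos : 0 < θ₀ := by
    have := Real.arctan_strictMono (show (0:ℝ) < b / a by positivity)
    rw [Real.arctan_zero] at this; exact this
  have hθ₀lt : θ₀ < Real.pi / 2 := Real.arctan_lt_pi_div_two _
  have hac : a = c * Real.cos θ₀ := by rw [hcos]; field_simp; exact hc_def.symm
  have hbc : b = c * Real.sin θ₀ := by rw [hsin]; field_simp; exact hc_def.symm
  -- key sign identity
  have hdiff : ∀ θ : ℝ, b * Real.cos θ - a * Real.sin θ = c * Real.sin (θ₀ - θ) := by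
    intro θ
    rw [Real.sin_sub]
    nth_rewrite 1 [hbc]; nth_rewrite 1 [hac]
    ring
  -- comparison on [0, θ₀]
  have hle1 : ∀ θ ∈ Set.Icc (0:ℝ) θ₀, a * Real.sin θ ≤ b * Real.cos θ := by
    intro θ hθ
    have h1 : 0 ≤ Real.sin (θ₀ - θ) :=
      Real.sin_nonneg_of_nonneg_of_le_pi (by linarith [hθ.2])
        (by nlinarith [Real.pi_pos, hθ.1])
    nlinarith [hdiff θ]
  -- comparison on [θ₀, π/2]
  have hle2 : ∀ θ ∈ Set.Icc θ₀ (Real.pi / 2), b * Real.cos θ ≤ a * Real.sin θ := by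
    intro θ hθ
    have h1 : Real.sin (θ₀ - θ) ≤ 0 := by
      have := Real.sin_nonneg_of_nonneg_of_le_pi (x := θ - θ₀)
        (by linarith [hθ.1]) (by nlinarith [Real.pi_pos, hθ.2, hθ₀pos])
      rw [← neg_sub, Real.sin_neg]
      linarith
    nlinarith [hdiff θ]
  -- continuity / integrability
  have hcs : Continuous fun θ : ℝ => a * Real.sin θ := continuous_const.mul Real.continuous_sin
  have hcc : Continuous fun θ : ℝ => b * Real.cos θ := continuous_const.mul Real.continuous_cos
  have hmaxc : Continuous fun θ : ℝ => max (a * Real.sin θ) (b * Real.cos θ) := hcs.max hcc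
  have hminc : Continuous fun θ : ℝ => min (a * Real.sin θ) (b * Real.cos θ) := hcs.min hcc
  have hmaxint : IntervalIntegrable (fun θ => max (a * Real.sin θ) (b * Real.cos θ))
      volume 0 (Real.pi / 2) := hmaxc.intervalIntegrable _ _
  have hminint : IntervalIntegrable (fun θ => min (a * Real.sin θ) (b * Real.cos θ))
      volume 0 (Real.pi / 2) := hminc.intervalIntegrable _ _
  have hpi2 : (0:ℝ) ≤ Real.pi / 2 := by positivity
  -- compute ∫ max = c
  have hmaxeq : (∫ θ in (0:ℝ)..(Real.pi / 2), max (a * Real.sin θ) (b * Real.cos θ)) = c := by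
    rw [← intervalIntegral.integral_add_adjacent_intervals (b := θ₀)
      (hmaxc.intervalIntegrable _ _) (hmaxc.intervalIntegrable _ _)]
    have e1 : (∫ θ in (0:ℝ)..θ₀, max (a * Real.sin θ) (b * Real.cos θ))
        = ∫ θ in (0:ℝ)..θ₀, b * Real.cos θ := by
      apply intervalIntegral.integral_congr
      intro θ hθ
      rw [Set.uIcc_of_le hθ₀pos.le] at hθ
      exact max_eq_right (hle1 θ hθ)
    have e2 : (∫ θ in θ₀..(Real.pi/2), max (a * Real.sin θ) (b * Real.cos θ))
        = ∫ θ in θ₀..(Real.pi/2), a * Real.sin θ := by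
      apply intervalIntegral.integral_congr
      intro θ hθ
      rw [Set.uIcc_of_le hθ₀lt.le] at hθ
      exact max_eq_left (hle2 θ hθ)
    rw [e1, e2, intervalIntegral.integral_const_mul, intervalIntegral.integral_const_mul,
      integral_cos, integral_sin, Real.sin_zero, Real.cos_pi_div_two, hθ₀_def, hsin, hcos,
      ← hc_def]
    have hcsq : c^2 = a^2 + b^2 := Real.sq_sqrt (by positivity)
    field_simp
    linarith
  -- compute ∫ min = a + b - c
  have hmineq : (∫ θ in (0:ℝ)..(Real.pi / 2), min (a * Real.sin θ) (b * Real.cos θ))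
      = a + b - c := by
    rw [← intervalIntegral.integral_add_adjacent_intervals (b := θ₀)
      (hminc.intervalIntegrable _ _) (hminc.intervalIntegrable _ _)]
    have e1 : (∫ θ in (0:ℝ)..θ₀, min (a * Real.sin θ) (b * Real.cos θ))
        = ∫ θ in (0:ℝ)..θ₀, a * Real.sin θ := by
      apply intervalIntegral.integral_congr
      intro θ hθ
      rw [Set.uIcc_of_le hθ₀pos.le] at hθ
      exact min_eq_left (hle1 θ hθ)
    have e2 : (∫ θ in θ₀..(Real.pi/2), min (a * Real.sin θ) (b * Real.cos θ))
        = ∫ θ in θ₀..(Real.pi/2), b * Real.cos θ := by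
      apply intervalIntegral.integral_congr
      intro θ hθ
      rw [Set.uIcc_of_le hθ₀lt.le] at hθ
      exact min_eq_right (hle2 θ hθ)
    rw [e1, e2, intervalIntegral.integral_const_mul, intervalIntegral.integral_const_mul,
      integral_cos, integral_sin, Real.cos_zero, Real.sin_pi_div_two, hθ₀_def, hsin, hcos,
      ← hc_def]
    have hcsq : c^2 = a^2 + b^2 := Real.sq_sqrt (by positivity)
    field_simp
    linarith
  -- a.e. bounds
  have haene : ∀ᵐ θ ∂(volume : Measure ℝ), θ ≠ 0 ∧ θ ≠ Real.pi / 2 := by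
    have h0 : (volume : Measure ℝ) ({(0:ℝ)} ∪ {Real.pi/2}) = 0 := by
      rw [measure_union_null_iff]
      exact ⟨measure_singleton _, measure_singleton _⟩
    refine (MeasureTheory.ae_iff).mpr (measure_mono_null ?_ h0)
    intro θ hθ
    simp only [Set.mem_setOf_eq, not_and_or, not_not] at hθ
    rcases hθ with h | h <;> simp [h]
  have hmem : ∀ θ : ℝ, θ ≠ 0 ∧ θ ≠ Real.pi / 2 → θ ∈ Set.Icc (0:ℝ) (Real.pi/2) →
      0 < a * Real.sin θ ∧ 0 < b * Real.cos θ := by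
    intro θ ⟨h0, h2⟩ hθ
    have hθpos : 0 < θ := lt_of_le_of_ne hθ.1 (Ne.symm h0)
    have hθlt : θ < Real.pi / 2 := lt_of_le_of_ne hθ.2 h2
    have hs : 0 < Real.sin θ := Real.sin_pos_of_pos_of_lt_pi hθpos
      (by linarith [Real.pi_pos])
    have hco : 0 < Real.cos θ := Real.cos_pos_of_mem_Ioo
      ⟨by linarith [Real.pi_pos], hθlt⟩
    exact ⟨by positivity, by positivity⟩
  have hlow : (∫ θ in (0:ℝ)..(Real.pi / 2), min (a * Real.sin θ) (b * Real.cos θ))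
      ≤ ∫ θ in (0:ℝ)..(Real.pi / 2), M (a * Real.sin θ) (b * Real.cos θ) := by
    apply intervalIntegral.integral_mono_ae_restrict hpi2 hminint hint
    refine (MeasureTheory.ae_restrict_iff' measurableSet_Icc).mpr ?_
    filter_upwards [haene] with θ hne hθ
    obtain ⟨hx, hy⟩ := hmem θ hne hθ
    exact (hMmean _ _ hx hy).1
  have hhigh : (∫ θ in (0:ℝ)..(Real.pi / 2), M (a * Real.sin θ) (b * Real.cos θ))
      ≤ ∫ θ in (0:ℝ)..(Real.pi / 2), max (a * Real.sin θ) (b * Real.cos θ) := by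
    apply intervalIntegral.integral_mono_ae_restrict hpi2 hint hmaxint
    refine (MeasureTheory.ae_restrict_iff' measurableSet_Icc).mpr ?_
    filter_upwards [haene] with θ hne hθ
    obtain ⟨hx, hy⟩ := hmem θ hne hθ
    exact (hMmean _ _ hx hy).2
  constructor
  · rw [hmineq] at hlow; linarith
  · rw [hmaxeq] at hhigh; linarith
end
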